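/- arXiv:1108.0835 — 12 statements merged into one kernel-verified Lean document; each statement's English description precedes it below -/
import Mathlib

section
/- Let φ : ℝ → ℝ be differentiable and strictly convex. Then the one-dimensional Bregman divergence Dφ is monotonic: for all real numbers a < b < c one has 0 ≤ Dφ(a,b) < Dφ(a,c) and 0 ≤ Dφ(b,c) < Dφ(a,c); moreover, for all x, y, Dφ(x,y) = 0 if and only if x = y. -/
/-- The one-dimensional Bregman divergence `Dφ(x,y) = φ(x) − φ(y) − φ'(y)(x−y)`. -/
noncomputable def bregman (φ : ℝ → ℝ) (x y : ℝ) : ℝ :=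
  φ x - φ y - deriv φ y * (x - y)

lemma bregman_pos (φ : ℝ → ℝ) (hdiff : Differentiable ℝ φ)
    (hconv : StrictConvexOn ℝ Set.univ φ) {x y : ℝ} (hxy : x ≠ y) :
    0 < bregman φ x y := by
  rcases lt_or_gt_of_ne hxy with h | h
  · -- x < y : slope φ x y < deriv φ y
    have hs := hconv.slope_lt_deriv (Set.mem_univ x) (Set.mem_univ y) h (hdiff y)
    rw [slope_def_field] at hs
    have hyx : 0 < y - x := by linarith
    have := (div_lt_iff₀ hyx).mp hs
    unfold bregman; nlinarith
  · -- y < x : deriv φ y < slope φ y x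
    have hs := hconv.deriv_lt_slope (Set.mem_univ y) (Set.mem_univ x) h (hdiff y)
    rw [slope_def_field] at hs
    have hxy' : 0 < x - y := by linarith
    have := (lt_div_iff₀ hxy').mp hs
    unfold bregman; nlinarith

theorem bregman_monotonic (φ : ℝ → ℝ) (hdiff : Differentiable ℝ φ)
    (hconv : StrictConvexOn ℝ Set.univ φ) :
    (∀ a b c : ℝ, a < b → b < c →
      (0 ≤ bregman φ a b ∧ bregman φ a b < bregman φ a c) ∧
      (0 ≤ bregman φ b c ∧ bregman φ b c < bregman φ a c)) ∧
    (∀ x y : ℝ, bregman φ x y = 0 ↔ x = y) := by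
  have hderiv : ∀ b c : ℝ, b < c → deriv φ b < deriv φ c := by
    intro b c hbc
    have h1 := hconv.deriv_lt_slope (Set.mem_univ b) (Set.mem_univ c) hbc (hdiff b)
    have h2 := hconv.slope_lt_deriv (Set.mem_univ b) (Set.mem_univ c) hbc (hdiff c)
    exact h1.trans h2
  constructor
  · intro a b c hab hbc
    have hab' := bregman_pos φ hdiff hconv hab.ne
    have hbc' := bregman_pos φ hdiff hconv hbc.ne
    have hkey : bregman φ a c =
        bregman φ a b + bregman φ b c + (deriv φ c - deriv φ b) * (b - a) := by
      unfold bregman; ring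
    have hd := hderiv b c hbc
    have hpos : 0 < (deriv φ c - deriv φ b) * (b - a) := by
      apply mul_pos <;> linarith
    constructor
    · exact ⟨hab'.le, by linarith⟩
    · exact ⟨hbc'.le, by linarith⟩
  · intro x y
    constructor
    · intro h
      by_contra hne
      exact absurd h (ne_of_gt (bregman_pos φ hdiff hconv hne))
    · rintro rfl; unfold bregman; ring
end

section
/- Let φ : ℝ → ℝ be differentiable with φ' monotone nondecreasing. Then the square root of the symmetrized Bregman divergence satisfies the reverse triangle inequality: for all a ≤ x ≤ b, √Dsφ(a,x) + √Dsφ(x,b) ≤ √Dsφ(a,b). -/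
/-- The symmetrized Bregman divergence `Dsφ(x,y) = (1/2)(x−y)(φ'(x) − φ'(y))`. -/
noncomputable def sbregman (φ : ℝ → ℝ) (x y : ℝ) : ℝ :=
  (1 / 2) * (x - y) * (deriv φ x - deriv φ y)

theorem sqrt_sbregman_reverse_triangle (φ : ℝ → ℝ) (hdiff : Differentiable ℝ φ)
    (hmono : Monotone (deriv φ)) :
    ∀ a x b : ℝ, a ≤ x → x ≤ b →
      Real.sqrt (sbregman φ a x) + Real.sqrt (sbregman φ x b) ≤
        Real.sqrt (sbregman φ a b) := by
  intro a x b hax hxb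
  set f := deriv φ with hf
  have hp : f a ≤ f x := hmono hax
  have hq : f x ≤ f b := hmono hxb
  have hA : (0:ℝ) ≤ sbregman φ a x := by
    simp only [sbregman, ← hf]; nlinarith
  have hB : (0:ℝ) ≤ sbregman φ x b := by
    simp only [sbregman, ← hf]; nlinarith
  have hC : (0:ℝ) ≤ sbregman φ a b := by
    simp only [sbregman, ← hf]; nlinarith [hmono (hax.trans hxb)]
  have hsA := Real.sq_sqrt hA
  have hsB := Real.sq_sqrt hB
  have hsAn := Real.sqrt_nonneg (sbregman φ a x)
  have hsBn := Real.sqrt_nonneg (sbregman φ x b)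
  rw [show Real.sqrt (sbregman φ a b) = Real.sqrt (sbregman φ a b) from rfl]
  have h : (Real.sqrt (sbregman φ a x) + Real.sqrt (sbregman φ x b))^2 ≤ sbregman φ a b := by
    have key : 2 * (Real.sqrt (sbregman φ a x) * Real.sqrt (sbregman φ x b)) ≤
        sbregman φ a b - sbregman φ a x - sbregman φ x b := by
      have hprod : (Real.sqrt (sbregman φ a x) * Real.sqrt (sbregman φ x b))^2 =
          sbregman φ a x * sbregman φ x b := by
        rw [mul_pow, hsA, hsB]
      have haval : sbregman φ a x = (1/2) * (x - a) * (f x - f a) := by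
        simp only [sbregman, ← hf]; ring
      have hbval : sbregman φ x b = (1/2) * (b - x) * (f b - f x) := by
        simp only [sbregman, ← hf]; ring
      have hdiff2 : sbregman φ a b - sbregman φ a x - sbregman φ x b =
          (1/2) * ((x - a) * (f b - f x) + (b - x) * (f x - f a)) := by
        simp only [sbregman, ← hf]; ring
      set S := (x - a) * (f b - f x) with hS
      set T := (b - x) * (f x - f a) with hT
      have hSn : 0 ≤ S := mul_nonneg (by linarith) (by linarith)
      have hTn : 0 ≤ T := mul_nonneg (by linarith) (by linarith)
      set t := Real.sqrt (sbregman φ a x) * Real.sqrt (sbregman φ x b) with htdef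
      have htn : 0 ≤ t := mul_nonneg hsAn hsBn
      have ht2 : (2 * t) ^ 2 = S * T := by
        rw [mul_pow, htdef, mul_pow, hsA, hsB, haval, hbval, hS, hT]; ring
      have hsq : (2 * t) ^ 2 ≤ ((S + T) / 2) ^ 2 := by nlinarith [sq_nonneg (S - T)]
      have h2t : 2 * t ≤ (S + T) / 2 := by
        calc 2 * t = Real.sqrt ((2 * t) ^ 2) := (Real.sqrt_sq (by linarith)).symm
          _ ≤ Real.sqrt (((S + T) / 2) ^ 2) := Real.sqrt_le_sqrt hsq
          _ = (S + T) / 2 := Real.sqrt_sq (by linarith)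
      rw [hdiff2]; linarith
    nlinarith
  calc Real.sqrt (sbregman φ a x) + Real.sqrt (sbregman φ x b)
      = Real.sqrt ((Real.sqrt (sbregman φ a x) + Real.sqrt (sbregman φ x b))^2) :=
        (Real.sqrt_sq (by positivity)).symm
    _ ≤ Real.sqrt (sbregman φ a b) := Real.sqrt_le_sqrt h
end

section
/- Let φ be twice continuously differentiable on a compact interval I = [x₁, x₂] with φ''(x) > 0 for all x ∈ I. Then there exists a finite constant μ such that √Dsφ is μ-defective on I: for all a, b, q ∈ I, |√Dsφ(a,q) − √Dsφ(b,q)| ≤ μ·√Dsφ(a,b). -/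
theorem sqrt_sbregman_mu_defective (φ : ℝ → ℝ) (x₁ x₂ : ℝ)
    (hd1 : Differentiable ℝ φ) (hd2 : Differentiable ℝ (deriv φ))
    (hcont : ContinuousOn (deriv (deriv φ)) (Set.Icc x₁ x₂))
    (hpos : ∀ x ∈ Set.Icc x₁ x₂, 0 < deriv (deriv φ) x) :
    ∃ μ : ℝ, ∀ a ∈ Set.Icc x₁ x₂, ∀ b ∈ Set.Icc x₁ x₂, ∀ q ∈ Set.Icc x₁ x₂,
      |Real.sqrt (sbregman φ a q) - Real.sqrt (sbregman φ b q)| ≤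
        μ * Real.sqrt (sbregman φ a b) := by
  rcases le_or_gt x₁ x₂ with hle | hlt
  · have hne : (Set.Icc x₁ x₂).Nonempty := Set.nonempty_Icc.2 hle
    obtain ⟨cm, hcm, hminOn⟩ := isCompact_Icc.exists_isMinOn hne hcont
    obtain ⟨cM, hcM, hmaxOn⟩ := isCompact_Icc.exists_isMaxOn hne hcont
    set m := deriv (deriv φ) cm with hmdef
    set M := deriv (deriv φ) cM with hMdef
    have hm0 : 0 < m := hpos cm hcm
    have hM0 : 0 < M := hpos cM hcM
    -- mean value theorem for deriv φ
    have mvt : ∀ x ∈ Set.Icc x₁ x₂, ∀ y ∈ Set.Icc x₁ x₂,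
        ∃ c ∈ Set.Icc x₁ x₂, deriv φ x - deriv φ y = deriv (deriv φ) c * (x - y) := by
      intro x hx y hy
      rcases lt_trichotomy x y with h | h | h
      · obtain ⟨c, hc, hceq⟩ := exists_deriv_eq_slope (deriv φ) h
          hd2.continuous.continuousOn (hd2.differentiableOn)
        refine ⟨c, ⟨hx.1.trans hc.1.le, hc.2.le.trans hy.2⟩, ?_⟩
        have hne' : y - x ≠ 0 := sub_ne_zero.2 h.ne'
        field_simp at hceq
        linarith
      · exact ⟨x, hx, by simp [h]⟩
      · obtain ⟨c, hc, hceq⟩ := exists_deriv_eq_slope (deriv φ) h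
          hd2.continuous.continuousOn (hd2.differentiableOn)
        refine ⟨c, ⟨hy.1.trans hc.1.le, hc.2.le.trans hx.2⟩, ?_⟩
        have hne' : x - y ≠ 0 := sub_ne_zero.2 h.ne'
        field_simp at hceq
        linarith
    have hmle : ∀ c ∈ Set.Icc x₁ x₂, m ≤ deriv (deriv φ) c := fun c hc => hminOn hc
    have hMge : ∀ c ∈ Set.Icc x₁ x₂, deriv (deriv φ) c ≤ M := fun c hc => hmaxOn hc
    -- bounds on sbregman
    have lb : ∀ x ∈ Set.Icc x₁ x₂, ∀ y ∈ Set.Icc x₁ x₂,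
        m / 2 * (x - y) ^ 2 ≤ sbregman φ x y := by
      intro x hx y hy
      obtain ⟨c, hc, he⟩ := mvt x hx y hy
      have h1 := hmle c hc
      have h2 : (0:ℝ) ≤ (x - y) ^ 2 := sq_nonneg _
      have : sbregman φ x y = 1 / 2 * deriv (deriv φ) c * (x - y) ^ 2 := by
        unfold sbregman; rw [he]; ring
      rw [this]; nlinarith
    have ub : ∀ x ∈ Set.Icc x₁ x₂, ∀ y ∈ Set.Icc x₁ x₂,
        sbregman φ x y ≤ M / 2 * (x - y) ^ 2 := by
      intro x hx y hy
      obtain ⟨c, hc, he⟩ := mvt x hx y hy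
      have h1 := hMge c hc
      have h2 : (0:ℝ) ≤ (x - y) ^ 2 := sq_nonneg _
      have : sbregman φ x y = 1 / 2 * deriv (deriv φ) c * (x - y) ^ 2 := by
        unfold sbregman; rw [he]; ring
      rw [this]; nlinarith
    -- Lipschitz bound on deriv φ
    have db : ∀ x ∈ Set.Icc x₁ x₂, ∀ y ∈ Set.Icc x₁ x₂,
        |deriv φ x - deriv φ y| ≤ M * |x - y| := by
      intro x hx y hy
      obtain ⟨c, hc, he⟩ := mvt x hx y hy
      rw [he, abs_mul, abs_of_pos (hpos c hc)]
      exact mul_le_mul_of_nonneg_right (hMge c hc) (abs_nonneg _)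
    -- sqrt lower bound
    have sqlb : ∀ x ∈ Set.Icc x₁ x₂, ∀ y ∈ Set.Icc x₁ x₂,
        Real.sqrt (m / 2) * |x - y| ≤ Real.sqrt (sbregman φ x y) := by
      intro x hx y hy
      have h := lb x hx y hy
      calc Real.sqrt (m / 2) * |x - y|
          = Real.sqrt (m / 2 * (x - y) ^ 2) := by
            rw [Real.sqrt_mul (by positivity), Real.sqrt_sq_eq_abs]
        _ ≤ Real.sqrt (sbregman φ x y) := Real.sqrt_le_sqrt h
    refine ⟨M / m, ?_⟩
    intro a ha b hb q hq
    set u := sbregman φ a q with hu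
    set v := sbregman φ b q with hv
    set w := sbregman φ a b with hw
    have hu0 : 0 ≤ u := le_trans (by positivity) (lb a ha q hq)
    have hv0 : 0 ≤ v := le_trans (by positivity) (lb b hb q hq)
    set su := Real.sqrt u with hsu
    set sv := Real.sqrt v with hsv
    have hsu0 : 0 ≤ su := Real.sqrt_nonneg _
    have hsv0 : 0 ≤ sv := Real.sqrt_nonneg _
    rcases eq_or_lt_of_le (add_nonneg hsu0 hsv0) with hs | hs
    · have h1 : su = 0 := by linarith
      have h2 : sv = 0 := by linarith
      rw [h1, h2]
      simp only [sub_zero, abs_zero]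
      positivity
    · -- su + sv > 0
      have key1 : |su - sv| * (su + sv) = |u - v| := by
        have h1 : (su - sv) * (su + sv) = u - v := by
          have := Real.sq_sqrt hu0
          have := Real.sq_sqrt hv0
          nlinarith
        calc |su - sv| * (su + sv) = |(su - sv) * (su + sv)| := by
              rw [abs_mul, abs_of_nonneg (by linarith : (0:ℝ) ≤ su + sv)]
          _ = |u - v| := by rw [h1]
      have key2 : |u - v| ≤ M / 2 * |a - b| * (|a - q| + |b - q|) := by
        have heq : u - v = 1 / 2 * ((a - b) * (deriv φ a - deriv φ q))
            + 1 / 2 * ((b - q) * (deriv φ a - deriv φ b)) := by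
          rw [hu, hv]; unfold sbregman; ring
        have h1 := db a ha q hq
        have h2 := db a ha b hb
        have hab := abs_nonneg (a - b)
        have haq := abs_nonneg (a - q)
        have hbq := abs_nonneg (b - q)
        calc |u - v| ≤ |1 / 2 * ((a - b) * (deriv φ a - deriv φ q))|
              + |1 / 2 * ((b - q) * (deriv φ a - deriv φ b))| := by
              rw [heq]; exact abs_add_le _ _
          _ = 1 / 2 * (|a - b| * |deriv φ a - deriv φ q|)
              + 1 / 2 * (|b - q| * |deriv φ a - deriv φ b|) := by
              rw [abs_mul, abs_mul, abs_mul, abs_mul,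
                show |(1:ℝ)/2| = 1/2 by norm_num]
          _ ≤ M / 2 * |a - b| * (|a - q| + |b - q|) := by
              nlinarith [mul_le_mul_of_nonneg_left h1 hab,
                mul_le_mul_of_nonneg_left h2 hbq]
      have hwlb := sqlb a ha b hb
      have huq := sqlb a ha q hq
      have hbq2 := sqlb b hb q hq
      have hss : Real.sqrt (m / 2) * Real.sqrt (m / 2) = m / 2 :=
        Real.mul_self_sqrt (by positivity)
      have hsqnn : (0:ℝ) ≤ Real.sqrt (m / 2) := Real.sqrt_nonneg _
      have key3 : M / 2 * |a - b| * (|a - q| + |b - q|)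
          ≤ (M / m * Real.sqrt w) * (su + sv) := by
        have hstep : Real.sqrt (m / 2) * |a - b| * (Real.sqrt (m / 2) * (|a - q| + |b - q|))
            ≤ Real.sqrt w * (su + sv) := by
          apply mul_le_mul hwlb ?_ (by positivity) (Real.sqrt_nonneg _)
          have := add_le_add huq hbq2
          linarith [this]
        have heq2 : M / 2 * |a - b| * (|a - q| + |b - q|)
            = M / m * (Real.sqrt (m / 2) * |a - b| * (Real.sqrt (m / 2) * (|a - q| + |b - q|))) := by
          rw [show Real.sqrt (m/2) * |a - b| * (Real.sqrt (m/2) * (|a - q| + |b - q|))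
              = (Real.sqrt (m/2) * Real.sqrt (m/2)) * (|a - b| * (|a - q| + |b - q|)) by ring, hss]
          field_simp [hm0.ne']
        rw [heq2]
        have hMm : (0:ℝ) ≤ M / m := by positivity
        calc M / m * (Real.sqrt (m / 2) * |a - b| * (Real.sqrt (m / 2) * (|a - q| + |b - q|)))
            ≤ M / m * (Real.sqrt w * (su + sv)) := mul_le_mul_of_nonneg_left hstep hMm
          _ = (M / m * Real.sqrt w) * (su + sv) := by ring
      have : |su - sv| * (su + sv) ≤ (M / m * Real.sqrt w) * (su + sv) := by
        rw [key1]; exact le_trans key2 key3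
      exact le_of_mul_le_mul_right this hs
  · refine ⟨0, ?_⟩
    intro a ha
    exact absurd (ha.1.trans ha.2) (not_le.2 hlt)
end

section
/- Let φ be twice continuously differentiable on a compact interval I = [x₁, x₂] with φ''(x) > 0 for all x ∈ I. Then there exists a finite constant μ such that √Dφ is right-sided μ-defective on I: for all a, b, q ∈ I, |√Dφ(a,q) − √Dφ(b,q)| ≤ μ·√Dφ(b,a). -/
/-- Mean value theorem for everywhere-differentiable functions. -/
lemma mvt_diff (f : ℝ → ℝ) (hf : Differentiable ℝ f) {u v : ℝ} (h : u < v) :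
    ∃ c ∈ Set.Ioo u v, f v - f u = deriv f c * (v - u) := by
  obtain ⟨c, hc, hc'⟩ := exists_deriv_eq_slope f h hf.continuous.continuousOn
    hf.differentiableOn
  refine ⟨c, hc, ?_⟩
  rw [hc', div_mul_cancel₀]
  exact sub_ne_zero.2 h.ne' 

/-- Strong convexity lower bound for the Bregman divergence. -/
lemma bregman_lower (φ : ℝ → ℝ) {x₁ x₂ m : ℝ}
    (hd1 : Differentiable ℝ φ) (hd2 : Differentiable ℝ (deriv φ))
    (hm : ∀ t ∈ Set.Icc x₁ x₂, m ≤ deriv (deriv φ) t)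
    {x y : ℝ} (hx : x ∈ Set.Icc x₁ x₂) (hy : y ∈ Set.Icc x₁ x₂) :
    m / 2 * (x - y) ^ 2 ≤ bregman φ x y := by
  set h : ℝ → ℝ := fun t => φ t - φ y - deriv φ y * (t - y) - m / 2 * (t - y) ^ 2 with hdef
  have hder : ∀ t, HasDerivAt h (deriv φ t - deriv φ y - m * (t - y)) t := by
    intro t
    have h1 : HasDerivAt φ (deriv φ t) t := (hd1 t).hasDerivAt
    have h3 : HasDerivAt (fun t => deriv φ y * (t - y)) (deriv φ y) t := by
      simpa using ((hasDerivAt_id t).sub_const y).const_mul (deriv φ y)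
    have h4 : HasDerivAt (fun t => m / 2 * (t - y) ^ 2) (m * (t - y)) t := by
      have := (((hasDerivAt_id t).sub_const y).pow 2).const_mul (m / 2)
      simp only [id_eq, pow_one, Nat.cast_ofNat, mul_one] at this
      refine this.congr_deriv ?_
      norm_num
      ring
    exact ((h1.sub_const (φ y)).sub h3).sub h4
  have hdiff : Differentiable ℝ h := fun t => (hder t).differentiableAt
  have hgoal : 0 ≤ h x → m / 2 * (x - y) ^ 2 ≤ bregman φ x y := by
    intro h0
    simp only [hdef, bregman] at h0 ⊢
    linarith
  apply hgoal
  rcases lt_trichotomy x y with hlt | heq | hgt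
  · -- x < y
    obtain ⟨e, he, heq⟩ := mvt_diff h hdiff hlt
    have hy0 : h y = 0 := by simp [hdef]
    have hde : deriv h e = deriv φ e - deriv φ y - m * (e - y) := (hder e).deriv
    -- MVT on deriv φ on (e, y)
    obtain ⟨d, hd, hdeq⟩ := mvt_diff (deriv φ) hd2 he.2
    have hdIcc : d ∈ Set.Icc x₁ x₂ := ⟨by linarith [hx.1, he.1, hd.1], by linarith [hy.2, hd.2]⟩
    have hmd := hm d hdIcc
    have hge : deriv φ y - deriv φ e ≥ m * (y - e) := by
      have h0 : (0:ℝ) ≤ y - e := by linarith [he.2]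
      have := mul_le_mul_of_nonneg_right hmd h0
      linarith [hdeq]
    have hle0 : deriv h e ≤ 0 := by rw [hde]; linarith
    have : deriv h e * (y - x) ≤ 0 :=
      mul_nonpos_of_nonpos_of_nonneg hle0 (by linarith)
    linarith
  · simp [hdef, heq]
  · -- y < x
    obtain ⟨e, he, heq⟩ := mvt_diff h hdiff hgt
    have hy0 : h y = 0 := by simp [hdef]
    have hde : deriv h e = deriv φ e - deriv φ y - m * (e - y) := (hder e).deriv
    obtain ⟨d, hd, hdeq⟩ := mvt_diff (deriv φ) hd2 he.1
    have hdIcc : d ∈ Set.Icc x₁ x₂ := ⟨by linarith [hy.1, hd.1], by linarith [hx.2, he.2, hd.2]⟩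
    have hmd := hm d hdIcc
    have hge : deriv φ e - deriv φ y ≥ m * (e - y) := by
      have h0 : (0:ℝ) ≤ e - y := by linarith [he.1]
      have := mul_le_mul_of_nonneg_right hmd h0
      linarith [hdeq]
    have hge0 : 0 ≤ deriv h e := by rw [hde]; linarith
    have : 0 ≤ deriv h e * (x - y) := mul_nonneg hge0 (by linarith)
    linarith

theorem sqrt_bregman_right_mu_defective (φ : ℝ → ℝ) (x₁ x₂ : ℝ)
    (hd1 : Differentiable ℝ φ) (hd2 : Differentiable ℝ (deriv φ))
    (hcont : ContinuousOn (deriv (deriv φ)) (Set.Icc x₁ x₂))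
    (hpos : ∀ x ∈ Set.Icc x₁ x₂, 0 < deriv (deriv φ) x) :
    ∃ μ : ℝ, ∀ a ∈ Set.Icc x₁ x₂, ∀ b ∈ Set.Icc x₁ x₂, ∀ q ∈ Set.Icc x₁ x₂,
      |Real.sqrt (bregman φ a q) - Real.sqrt (bregman φ b q)| ≤
        μ * Real.sqrt (bregman φ b a) := by
  rcases lt_or_ge x₂ x₁ with hlt | hle
  · exact ⟨0, fun a ha => absurd ha (by simp [Set.Icc_eq_empty_of_lt hlt])⟩
  have hne : (Set.Icc x₁ x₂).Nonempty := Set.nonempty_Icc.mpr hle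
  have hcomp : IsCompact (Set.Icc x₁ x₂) := isCompact_Icc
  obtain ⟨zm, hzm, hzmin⟩ := hcomp.exists_isMinOn hne hcont
  obtain ⟨zM, hzM, hzmax⟩ := hcomp.exists_isMaxOn hne hcont
  set m := deriv (deriv φ) zm with hm_def
  set M := deriv (deriv φ) zM with hM_def
  have hm0 : 0 < m := hpos zm hzm
  have hmle : ∀ t ∈ Set.Icc x₁ x₂, m ≤ deriv (deriv φ) t := fun t ht => hzmin ht
  have hMle : ∀ t ∈ Set.Icc x₁ x₂, ‖deriv (deriv φ) t‖ ≤ M := by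
    intro t ht
    rw [Real.norm_eq_abs, abs_of_pos (hpos t ht)]
    exact hzmax ht
  have hM0 : 0 < M := lt_of_lt_of_le hm0 (hzmin hzM)
  -- Lipschitz bound for deriv φ
  have hlip : ∀ u ∈ Set.Icc x₁ x₂, ∀ v ∈ Set.Icc x₁ x₂,
      |deriv φ v - deriv φ u| ≤ M * |v - u| := by
    intro u hu v hv
    have := (convex_Icc x₁ x₂).norm_image_sub_le_of_norm_deriv_le
      (f := deriv φ) (fun t _ => hd2 t) hMle hu hv
    simpa [Real.norm_eq_abs] using this
  -- lower bounds on sqrt of bregman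
  set s := Real.sqrt (m / 2) with hs_def
  have hs0 : 0 < s := Real.sqrt_pos.mpr (by linarith)
  have hsq : s ^ 2 = m / 2 := Real.sq_sqrt (by linarith)
  have hlow : ∀ x ∈ Set.Icc x₁ x₂, ∀ y ∈ Set.Icc x₁ x₂,
      s * |x - y| ≤ Real.sqrt (bregman φ x y) := by
    intro x hx y hy
    have h1 : m / 2 * (x - y) ^ 2 ≤ bregman φ x y := bregman_lower φ hd1 hd2 hmle hx hy
    calc s * |x - y| = Real.sqrt (m / 2 * (x - y) ^ 2) := by
          rw [Real.sqrt_mul (by linarith), Real.sqrt_sq_eq_abs]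
      _ ≤ Real.sqrt (bregman φ x y) := Real.sqrt_le_sqrt h1
  have hbnn : ∀ x ∈ Set.Icc x₁ x₂, ∀ y ∈ Set.Icc x₁ x₂, 0 ≤ bregman φ x y := by
    intro x hx y hy
    have := bregman_lower φ hd1 hd2 hmle hx hy
    nlinarith
  refine ⟨2 * M / m, ?_⟩
  intro a ha b hb q hq
  set Da := bregman φ a q with hDa
  set Db := bregman φ b q with hDb
  set Dba := bregman φ b a with hDba
  have hDa0 : 0 ≤ Da := hbnn a ha q hq
  have hDb0 : 0 ≤ Db := hbnn b hb q hq
  have hDba0 : 0 ≤ Real.sqrt Dba := Real.sqrt_nonneg _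
  have hμ0 : 0 ≤ 2 * M / m := by positivity
  rcases eq_or_ne a b with rfl | hab
  · simp only [hDa, hDb, sub_self, abs_zero]
    exact mul_nonneg hμ0 (Real.sqrt_nonneg _)
  -- a ≠ b
  set X := |Real.sqrt Da - Real.sqrt Db| with hX
  have hX0 : 0 ≤ X := abs_nonneg _
  -- MVT for φ between a and b
  obtain ⟨c, hcIcc, hcmem, hceq⟩ :
      ∃ c, c ∈ Set.Icc x₁ x₂ ∧ (min a b ≤ c ∧ c ≤ max a b) ∧
        φ a - φ b = deriv φ c * (a - b) := by
    rcases lt_or_gt_of_ne hab with h | h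
    · obtain ⟨c, hc, hceq⟩ := mvt_diff φ hd1 h
      refine ⟨c, ⟨by linarith [ha.1, hc.1], by linarith [hb.2, hc.2]⟩,
        ⟨le_trans (min_le_left a b) hc.1.le, le_trans hc.2.le (le_max_right a b)⟩, ?_⟩
      linear_combination -hceq
    · obtain ⟨c, hc, hceq⟩ := mvt_diff φ hd1 h
      refine ⟨c, ⟨by linarith [hb.1, hc.1], by linarith [ha.2, hc.2]⟩,
        ⟨le_trans (min_le_right a b) hc.1.le, le_trans hc.2.le (le_max_left a b)⟩, ?_⟩
      linear_combination hceq
  set V := max |a - q| |b - q| with hV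
  have hV0 : 0 ≤ V := le_trans (abs_nonneg _) (le_max_left _ _)
  have hcqV : |c - q| ≤ V := by
    rw [abs_le]
    rcases le_total a b with h | h
    · rw [min_eq_left h, max_eq_right h] at hcmem
      constructor
      · have := neg_abs_le (a - q)
        have := le_max_left |a - q| |b - q|
        linarith [hcmem.1]
      · have := le_abs_self (b - q)
        have := le_max_right |a - q| |b - q|
        linarith [hcmem.2]
    · rw [min_eq_right h, max_eq_left h] at hcmem
      constructor
      · have := neg_abs_le (b - q)
        have := le_max_right |a - q| |b - q|
        linarith [hcmem.1]
      · have := le_abs_self (a - q)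
        have := le_max_left |a - q| |b - q|
        linarith [hcmem.2]
  -- |Da - Db| ≤ M * V * |a - b|
  have hdiffDa : Da - Db = (deriv φ c - deriv φ q) * (a - b) := by
    simp only [hDa, hDb, bregman]
    linear_combination hceq
  have habs : |Da - Db| ≤ M * V * |a - b| := by
    rw [hdiffDa, abs_mul]
    have h1 : |deriv φ c - deriv φ q| ≤ M * |c - q| := hlip q hq c hcIcc
    have h2 : M * |c - q| ≤ M * V := mul_le_mul_of_nonneg_left hcqV hM0.le
    exact mul_le_mul_of_nonneg_right (h1.trans h2) (abs_nonneg _)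
  -- X * (√Da + √Db) = |Da - Db|
  have hprod : X * (Real.sqrt Da + Real.sqrt Db) = |Da - Db| := by
    have h1 : (Real.sqrt Da - Real.sqrt Db) * (Real.sqrt Da + Real.sqrt Db) = Da - Db := by
      linear_combination Real.sq_sqrt hDa0 - Real.sq_sqrt hDb0
    have h2 : 0 ≤ Real.sqrt Da + Real.sqrt Db := by positivity
    rw [hX, ← abs_of_nonneg h2, ← abs_mul, h1]
  -- sum of sqrts lower bound
  have hsum : s * V ≤ Real.sqrt Da + Real.sqrt Db := by
    have h1 := hlow a ha q hq
    have h2 := hlow b hb q hq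
    rcases max_cases |a - q| |b - q| with ⟨hmax, _⟩ | ⟨hmax, _⟩ <;> rw [hV, hmax]
    · calc s * |a - q| ≤ Real.sqrt Da := h1
        _ ≤ Real.sqrt Da + Real.sqrt Db := by linarith [Real.sqrt_nonneg Db]
    · calc s * |b - q| ≤ Real.sqrt Db := h2
        _ ≤ Real.sqrt Da + Real.sqrt Db := by linarith [Real.sqrt_nonneg Da]
  -- case V = 0
  rcases eq_or_lt_of_le hV0 with hVz | hVpos
  · exfalso
    have h1 : |a - q| = 0 := le_antisymm (hVz ▸ le_max_left _ _) (abs_nonneg _)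
    have h2 : |b - q| = 0 := le_antisymm (hVz ▸ le_max_right _ _) (abs_nonneg _)
    rw [abs_eq_zero, sub_eq_zero] at h1 h2
    exact hab (h1.trans h2.symm)
  -- main chain : X * s * V ≤ M * V * |a - b|
  have hchain : X * s * V ≤ M * V * |a - b| := by
    calc X * s * V = X * (s * V) := by ring
      _ ≤ X * (Real.sqrt Da + Real.sqrt Db) := mul_le_mul_of_nonneg_left hsum hX0
      _ = |Da - Db| := hprod
      _ ≤ M * V * |a - b| := habs
  have hXs : X * s ≤ M * |a - b| := by
    have := (mul_le_mul_iff_of_pos_right hVpos).mp (by linarith [hchain] : (X * s) * V ≤ (M * |a - b|) * V)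
    exact this
  have hab' : s * |b - a| ≤ Real.sqrt Dba := hlow b hb a ha
  have habba : |a - b| = |b - a| := abs_sub_comm a b
  -- X * s^2 ≤ M * √Dba
  have hfinal : X * (m / 2) ≤ M * Real.sqrt Dba := by
    have h1 : X * s * s ≤ M * |a - b| * s := mul_le_mul_of_nonneg_right hXs hs0.le
    have h2 : M * |a - b| * s = M * (s * |b - a|) := by rw [habba]; ring
    have h3 : M * (s * |b - a|) ≤ M * Real.sqrt Dba := mul_le_mul_of_nonneg_left hab' hM0.le
    calc X * (m / 2) = X * s * s := by rw [← hsq]; ring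
      _ ≤ M * Real.sqrt Dba := by linarith
  have : 2 * M / m * Real.sqrt Dba = 2 * (M * Real.sqrt Dba) / m := by ring
  rw [this, le_div_iff₀ hm0]
  linarith
end

section
/- Let φ be twice continuously differentiable on a compact interval I = [x₁, x₂] with φ''(x) > 0 for all x ∈ I. Then there exists a finite constant μ such that √Dφ is left-sided μ-defective on I: for all a, b, q ∈ I, |√Dφ(q,a) − √Dφ(q,b)| ≤ μ·√Dφ(a,b). -/
lemma breg_lower_aux (φ : ℝ → ℝ) (x₁ x₂ c : ℝ)
    (hd1 : Differentiable ℝ φ) (hd2 : Differentiable ℝ (deriv φ))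
    (hc : ∀ t ∈ Set.Icc x₁ x₂, c ≤ deriv (deriv φ) t) :
    ∀ x ∈ Set.Icc x₁ x₂, ∀ y ∈ Set.Icc x₁ x₂, c / 2 * (x - y) ^ 2 ≤ bregman φ x y := by
  intro x hx y hy
  set ψ : ℝ → ℝ := fun t => φ t - φ y - deriv φ y * (t - y) - c / 2 * (t - y) ^ 2 with hψ
  set χ : ℝ → ℝ := fun t => deriv φ t - deriv φ y - c * (t - y) with hχ
  have hψd : ∀ t, HasDerivAt ψ (χ t) t := by
    intro t
    have h1 : HasDerivAt (fun t : ℝ => φ t - φ y - deriv φ y * (t - y) - c / 2 * (t - y) ^ 2)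
        (deriv φ t - 0 - deriv φ y * 1 - c / 2 * (2 * (t - y) ^ 1 * 1)) t := by
      exact (((hd1 t).hasDerivAt.sub (hasDerivAt_const t (φ y))).sub
        (((hasDerivAt_id t).sub_const y).const_mul (deriv φ y))).sub
        ((((hasDerivAt_id t).sub_const y).pow 2).const_mul (c / 2))
    convert h1 using 1
    ring
  have hχd : ∀ t, HasDerivAt χ (deriv (deriv φ) t - c) t := by
    intro t
    have h1 : HasDerivAt (fun t : ℝ => deriv φ t - deriv φ y - c * (t - y))
        (deriv (deriv φ) t - 0 - c * 1) t := by
      exact (((hd2 t).hasDerivAt.sub (hasDerivAt_const t (deriv φ y))).sub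
        (((hasDerivAt_id t).sub_const y).const_mul c))
    convert h1 using 1
    ring
  have hχc : Continuous χ := by
    have := fun t => (hχd t).differentiableAt
    exact Differentiable.continuous fun t => this t
  have hmono : MonotoneOn χ (Set.Icc x₁ x₂) := by
    apply monotoneOn_of_deriv_nonneg (convex_Icc x₁ x₂) hχc.continuousOn
    · exact fun t _ => ((hχd t).differentiableAt).differentiableWithinAt
    · intro t ht
      rw [(hχd t).deriv]
      rw [interior_Icc] at ht
      have := hc t (Set.mem_Icc_of_Ioo ht)
      linarith
  have hχy : χ y = 0 := by simp [hχ]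
  have hψy : ψ y = 0 := by simp [hψ]
  have goal0 : 0 ≤ ψ x := by
    rcases lt_trichotomy x y with h | h | h
    · obtain ⟨ζ, hζ, hζeq⟩ := exists_hasDerivAt_eq_slope ψ χ h
        (Differentiable.continuous (fun t => (hψd t).differentiableAt)).continuousOn
        (fun t _ => hψd t)
      have hζs : ζ ∈ Set.Icc x₁ x₂ :=
        ⟨le_trans hx.1 (le_of_lt hζ.1), le_trans (le_of_lt hζ.2) hy.2⟩
      have hle : χ ζ ≤ 0 := hχy ▸ hmono hζs hy (le_of_lt hζ.2)
      rw [hζeq, hψy] at hle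
      have hyx : 0 < y - x := by linarith
      rw [div_nonpos_iff] at hle
      rcases hle with ⟨h1, _⟩ | ⟨_, h2⟩ <;> linarith
    · rw [h]; exact le_of_eq hψy.symm
    · obtain ⟨ζ, hζ, hζeq⟩ := exists_hasDerivAt_eq_slope ψ χ h
        (Differentiable.continuous (fun t => (hψd t).differentiableAt)).continuousOn
        (fun t _ => hψd t)
      have hζs : ζ ∈ Set.Icc x₁ x₂ :=
        ⟨le_trans hy.1 (le_of_lt hζ.1), le_trans (le_of_lt hζ.2) hx.2⟩
      have hle : 0 ≤ χ ζ := hχy ▸ hmono hy hζs (le_of_lt hζ.1)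
      rw [hζeq, hψy] at hle
      have hyx : 0 < x - y := by linarith
      rw [div_nonneg_iff] at hle
      rcases hle with ⟨h1, _⟩ | ⟨_, h2⟩ <;> linarith
  simp only [hψ] at goal0
  unfold bregman
  linarith

set_option maxHeartbeats 1000000 in
theorem sqrt_bregman_left_mu_defective (φ : ℝ → ℝ) (x₁ x₂ : ℝ)
    (hd1 : Differentiable ℝ φ) (hd2 : Differentiable ℝ (deriv φ))
    (hcont : ContinuousOn (deriv (deriv φ)) (Set.Icc x₁ x₂))
    (hpos : ∀ x ∈ Set.Icc x₁ x₂, 0 < deriv (deriv φ) x) :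
    ∃ μ : ℝ, ∀ a ∈ Set.Icc x₁ x₂, ∀ b ∈ Set.Icc x₁ x₂, ∀ q ∈ Set.Icc x₁ x₂,
      |Real.sqrt (bregman φ q a) - Real.sqrt (bregman φ q b)| ≤
        μ * Real.sqrt (bregman φ a b) := by
  by_cases hne : (Set.Icc x₁ x₂).Nonempty
  swap
  · exact ⟨0, fun a ha => absurd ⟨a, ha⟩ hne⟩
  obtain ⟨ξm, hξm, hmin⟩ := isCompact_Icc.exists_isMinOn hne hcont
  obtain ⟨ξM, hξM, hmax⟩ := isCompact_Icc.exists_isMaxOn hne hcont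
  set f2 := deriv (deriv φ) with hf2
  set m := f2 ξm with hm
  set M := f2 ξM with hM
  have hm0 : 0 < m := hpos ξm hξm
  have hms : ∀ t ∈ Set.Icc x₁ x₂, m ≤ f2 t := fun t ht => hmin ht
  have hMs : ∀ t ∈ Set.Icc x₁ x₂, f2 t ≤ M := fun t ht => hmax ht
  have hmM : m ≤ M := hMs ξm hξm
  have hM0 : 0 < M := lt_of_lt_of_le hm0 hmM
  -- lower bound
  have lower : ∀ x ∈ Set.Icc x₁ x₂, ∀ y ∈ Set.Icc x₁ x₂,
      m / 2 * (x - y) ^ 2 ≤ bregman φ x y :=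
    breg_lower_aux φ x₁ x₂ m hd1 hd2 hms
  -- upper bound via negation
  have hderivneg : deriv (fun t => -φ t) = fun t => -deriv φ t := by
    funext t; exact deriv.neg
  have upper : ∀ x ∈ Set.Icc x₁ x₂, ∀ y ∈ Set.Icc x₁ x₂,
      bregman φ x y ≤ M / 2 * (x - y) ^ 2 := by
    have h := breg_lower_aux (fun t => -φ t) x₁ x₂ (-M) hd1.neg
      (by rw [hderivneg]; exact hd2.neg)
      (by
        intro t ht
        have : deriv (deriv fun t => -φ t) t = -f2 t := by
          rw [hderivneg]
          exact deriv.neg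
        rw [this]
        have := hMs t ht
        linarith)
    intro x hx y hy
    have h2 := h x hx y hy
    have hbr : bregman (fun t => -φ t) x y = -bregman φ x y := by
      unfold bregman
      rw [hderivneg]
      ring
    rw [hbr] at h2
    linarith
  have nonneg : ∀ x ∈ Set.Icc x₁ x₂, ∀ y ∈ Set.Icc x₁ x₂, 0 ≤ bregman φ x y := by
    intro x hx y hy
    have := lower x hx y hy
    nlinarith [sq_nonneg (x - y)]
  refine ⟨3 * M / m, ?_⟩
  intro a ha b hb q hq
  have hμ0 : 0 ≤ 3 * M / m := by positivity
  set u := Real.sqrt (bregman φ q a) with hu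
  set v := Real.sqrt (bregman φ q b) with hv
  set w := Real.sqrt (bregman φ a b) with hw
  have hu0 : 0 ≤ u := Real.sqrt_nonneg _
  have hv0 : 0 ≤ v := Real.sqrt_nonneg _
  have hw0 : 0 ≤ w := Real.sqrt_nonneg _
  by_cases hab : a = b
  · subst hab
    simpa [hu, hv] using mul_nonneg hμ0 hw0
  -- sqrt lower bounds
  have hk : (0:ℝ) < Real.sqrt (m / 2) := Real.sqrt_pos.mpr (by linarith)
  set k := Real.sqrt (m / 2) with hkdef
  have sqrt_lb : ∀ x ∈ Set.Icc x₁ x₂, ∀ y ∈ Set.Icc x₁ x₂,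
      k * |x - y| ≤ Real.sqrt (bregman φ x y) := by
    intro x hx y hy
    have h1 := Real.sqrt_le_sqrt (lower x hx y hy)
    rwa [Real.sqrt_mul (by linarith : (0:ℝ) ≤ m / 2), Real.sqrt_sq_eq_abs] at h1
  have hua := sqrt_lb q hq a ha
  have hub := sqrt_lb q hq b hb
  have hwa := sqrt_lb a ha b hb
  -- key identity and numerator bound
  have hphi : |deriv φ b - deriv φ a| ≤ M * |b - a| := by
    have h1 : (deriv φ b - deriv φ a) * (b - a) = bregman φ b a + bregman φ a b := by
      unfold bregman; ring
    have h2 : bregman φ b a + bregman φ a b ≤ M * (b - a) ^ 2 := by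
      have := upper b hb a ha
      have := upper a ha b hb
      nlinarith [sq_nonneg (a - b)]
    have h3 : |deriv φ b - deriv φ a| * |b - a| ≤ (M * |b - a|) * |b - a| := by
      rw [← abs_mul, h1]
      have hnn : 0 ≤ bregman φ b a + bregman φ a b :=
        add_nonneg (nonneg b hb a ha) (nonneg a ha b hb)
      rw [abs_of_nonneg hnn]
      calc bregman φ b a + bregman φ a b ≤ M * (b - a) ^ 2 := h2
        _ = M * |b - a| * |b - a| := by rw [← sq_abs]; ring
    have hba : 0 < |b - a| := abs_pos.mpr (sub_ne_zero.mpr (Ne.symm hab))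
    exact le_of_mul_le_mul_right h3 hba
  have hid : bregman φ q a - bregman φ q b =
      bregman φ b a + (deriv φ b - deriv φ a) * (q - b) := by
    unfold bregman; ring
  have hnum : |bregman φ q a - bregman φ q b| ≤
      M / 2 * |a - b| ^ 2 + M * |a - b| * |q - b| := by
    rw [hid]
    calc |bregman φ b a + (deriv φ b - deriv φ a) * (q - b)|
        ≤ |bregman φ b a| + |(deriv φ b - deriv φ a) * (q - b)| := abs_add_le _ _
      _ ≤ M / 2 * |a - b| ^ 2 + M * |a - b| * |q - b| := by
          rw [abs_of_nonneg (nonneg b hb a ha), abs_mul]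
          have h1 : bregman φ b a ≤ M / 2 * |a - b| ^ 2 := by
            have := upper b hb a ha
            calc bregman φ b a ≤ M / 2 * (b - a) ^ 2 := this
              _ = M / 2 * |a - b| ^ 2 := by rw [← sq_abs, abs_sub_comm]
          have h2 : |deriv φ b - deriv φ a| * |q - b| ≤ M * |a - b| * |q - b| := by
            apply mul_le_mul_of_nonneg_right _ (abs_nonneg _)
            rwa [abs_sub_comm a b]
          linarith
  have huaU : k * |q - a| ≤ u := hua
  have hubV : k * |q - b| ≤ v := hub
  have hwaW : k * |a - b| ≤ w := hwa
  have hu2 : u ^ 2 = bregman φ q a := by rw [hu]; exact Real.sq_sqrt (nonneg q hq a ha)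
  have hv2 : v ^ 2 = bregman φ q b := by rw [hv]; exact Real.sq_sqrt (nonneg q hq b hb)
  have hk2 : k ^ 2 = m / 2 := by rw [hkdef]; exact Real.sq_sqrt (by linarith)
  clear_value u v w k m M f2
  clear sqrt_lb hua hub hwa hmin hmax hms hMs hcont hpos lower upper nonneg hid hphi
  clear hderivneg hf2 hm hM hkdef hu hv hw hd1 hd2 hne hξm hξM
  -- main estimate
  by_cases huv : 0 < u + v
  · rw [← mul_le_mul_iff_of_pos_right huv]
    have hlhs : |u - v| * (u + v) = |bregman φ q a - bregman φ q b| := by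
      rw [← abs_of_nonneg (by linarith : 0 ≤ u + v), ← abs_mul]
      have h : (u - v) * (u + v) = u ^ 2 - v ^ 2 := by ring
      rw [h, hu2, hv2]
    rw [hlhs]
    have hAuv : k * |a - b| ≤ u + v := by
      have htri : |a - b| ≤ |q - a| + |q - b| := by
        calc |a - b| = |(a - q) + (q - b)| := by ring_nf
          _ ≤ |a - q| + |q - b| := abs_add_le _ _
          _ = |q - a| + |q - b| := by rw [abs_sub_comm]
      nlinarith
    have hBuv : k * |q - b| ≤ u + v := by linarith
    have hp1 : (k * |a - b|) * (k * |a - b|) ≤ w * (u + v) :=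
      mul_le_mul hwaW hAuv (by positivity) hw0
    have hp2 : (k * |a - b|) * (k * |q - b|) ≤ w * (u + v) :=
      mul_le_mul hwaW hBuv (by positivity) hw0
    calc |bregman φ q a - bregman φ q b|
        ≤ M / 2 * |a - b| ^ 2 + M * |a - b| * |q - b| := hnum
      _ ≤ 3 * M / m * (w * (u + v)) := by
          have heq : 3 * M / m * (w * (u + v)) = 3 * M * (w * (u + v)) / m := by ring
          rw [heq, le_div_iff₀ hm0]
          have hq1 : m / 2 * (|a - b| * |a - b|) ≤ w * (u + v) := by nlinarith [hp1, hk2]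
          have hq2 : m / 2 * (|a - b| * |q - b|) ≤ w * (u + v) := by nlinarith [hp2, hk2]
          nlinarith [mul_le_mul_of_nonneg_left hq1 hM0.le,
            mul_le_mul_of_nonneg_left hq2 hM0.le]
      _ = 3 * M / m * w * (u + v) := by ring
  · have hu' : u = 0 := by linarith
    have hv' : v = 0 := by linarith
    rw [hu', hv']
    simpa using mul_nonneg hμ0 hw0
end

section
/- Let D : ℝ × ℝ → ℝ be a distance function that is monotonic (for all a < b < c: 0 ≤ D(a,b) < D(a,c), 0 ≤ D(b,c) < D(a,c), and D(x,y) = 0 iff x = y) and satisfies the reverse triangle inequality (for all a ≤ b ≤ c: D(a,b) + D(b,c) ≤ D(a,c)). Let a ≤ b with D(a,b) = s, let ℓ > 0, and let I be a finite collection of pairwise disjoint closed intervals [x, x'], each intersecting [a,b] and each satisfying D(x,x') ≥ ℓ. Then the number of intervals in I is at most s/ℓ + 2. -/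
theorem interval_packing (D : ℝ → ℝ → ℝ)
    (hmono : ∀ a b c : ℝ, a < b → b < c →
      (0 ≤ D a b ∧ D a b < D a c) ∧ (0 ≤ D b c ∧ D b c < D a c))
    (hrefl : ∀ x y : ℝ, D x y = 0 ↔ x = y)
    (hrti : ∀ a b c : ℝ, a ≤ b → b ≤ c → D a b + D b c ≤ D a c)
    (a b s ℓ : ℝ) (hab : a ≤ b) (hs : D a b = s) (hℓ : 0 < ℓ)
    (I : Finset (ℝ × ℝ))
    (hvalid : ∀ p ∈ I, p.1 ≤ p.2)
    (hdisj : ∀ p ∈ I, ∀ q ∈ I, p ≠ q → Disjoint (Set.Icc p.1 p.2) (Set.Icc q.1 q.2))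
    (hinter : ∀ p ∈ I, (Set.Icc p.1 p.2 ∩ Set.Icc a b).Nonempty)
    (hlen : ∀ p ∈ I, ℓ ≤ D p.1 p.2) :
    (I.card : ℝ) ≤ s / ℓ + 2 := by
  classical
  have hnonneg : ∀ x y : ℝ, x ≤ y → 0 ≤ D x y := by
    intro x y hxy
    rcases eq_or_lt_of_le hxy with h | h
    · exact le_of_eq ((hrefl x y).mpr h).symm
    · exact ((hmono x y (y + 1) h (by linarith)).1).1
  -- key packing lemma
  have key : ∀ J : Finset (ℝ × ℝ), ∀ b' : ℝ,
      (∀ p ∈ J, p.1 ≤ p.2) →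
      (∀ p ∈ J, ∀ q ∈ J, p ≠ q → Disjoint (Set.Icc p.1 p.2) (Set.Icc q.1 q.2)) →
      (∀ p ∈ J, a ≤ p.1 ∧ p.2 ≤ b') →
      (∀ p ∈ J, ℓ ≤ D p.1 p.2) →
      a ≤ b' → (J.card : ℝ) * ℓ ≤ D a b' := by
    intro J
    induction J using Finset.strongInduction with
    | _ J ih =>
      intro b' hv hd hin hl hab'
      rcases J.eq_empty_or_nonempty with rfl | hne
      · simpa using hnonneg a b' hab'
      · obtain ⟨p, hp, hpmax⟩ := J.exists_max_image (fun p => p.1) hne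
        have hqlt : ∀ q ∈ J.erase p, q.2 < p.1 := by
          intro q hq
          have hqJ := Finset.mem_of_mem_erase hq
          have hqne := Finset.ne_of_mem_erase hq
          by_contra hcon
          push_neg at hcon
          have h1 : p.1 ∈ Set.Icc q.1 q.2 :=
            ⟨hpmax q hqJ, hcon⟩
          have h2 : p.1 ∈ Set.Icc p.1 p.2 := ⟨le_refl _, hv p hp⟩
          exact (hd q hqJ p hp hqne).ne_of_mem h1 h2 rfl
        have hap1 : a ≤ p.1 := (hin p hp).1
        have ihe : ((J.erase p).card : ℝ) * ℓ ≤ D a p.1 := by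
          apply ih (J.erase p) (Finset.erase_ssubset hp) p.1
          · exact fun q hq => hv q (Finset.mem_of_mem_erase hq)
          · intro q hq r hr hqr
            exact hd q (Finset.mem_of_mem_erase hq) r (Finset.mem_of_mem_erase hr) hqr
          · exact fun q hq => ⟨(hin q (Finset.mem_of_mem_erase hq)).1, le_of_lt (hqlt q hq)⟩
          · exact fun q hq => hl q (Finset.mem_of_mem_erase hq)
          · exact hap1
        have hcard : (J.card : ℝ) = ((J.erase p).card : ℝ) + 1 := by
          have h1 : 1 ≤ J.card := Finset.card_pos.mpr hne
          rw [Finset.card_erase_of_mem hp, Nat.cast_sub h1]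
          push_cast; ring
        have h1 : D a p.1 + D p.1 p.2 ≤ D a p.2 := hrti a p.1 p.2 hap1 (hv p hp)
        have h2 : D a p.2 + D p.2 b' ≤ D a b' :=
          hrti a p.2 b' (le_trans hap1 (hv p hp)) (hin p hp).2
        have h3 : 0 ≤ D p.2 b' := hnonneg p.2 b' (hin p hp).2
        have h4 : ℓ ≤ D p.1 p.2 := hl p hp
        rw [hcard]
        nlinarith
  -- split I
  set J := I.filter (fun p => a ≤ p.1 ∧ p.2 ≤ b) with hJ
  have hJsub : J ⊆ I := Finset.filter_subset _ _
  have hkey : (J.card : ℝ) * ℓ ≤ s := by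
    rw [← hs]
    apply key J b
    · exact fun p hp => hvalid p (hJsub hp)
    · exact fun p hp q hq hpq => hdisj p (hJsub hp) q (hJsub hq) hpq
    · intro p hp
      exact (Finset.mem_filter.mp hp).2
    · exact fun p hp => hlen p (hJsub hp)
    · exact hab
  -- at most one interval containing a given point
  have hone : ∀ x : ℝ, ((I.filter (fun p => x ∈ Set.Icc p.1 p.2)).card) ≤ 1 := by
    intro x
    apply Finset.card_le_one.mpr
    intro p hp q hq
    rw [Finset.mem_filter] at hp hq
    by_contra hpq
    exact (hdisj p hp.1 q hq.1 hpq).ne_of_mem hp.2 hq.2 rfl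
  have hsdiff : (I \ J) ⊆ (I.filter (fun p => a ∈ Set.Icc p.1 p.2)) ∪
      (I.filter (fun p => b ∈ Set.Icc p.1 p.2)) := by
    intro p hp
    rw [Finset.mem_sdiff] at hp
    obtain ⟨hpI, hpJ⟩ := hp
    have hnot : ¬(a ≤ p.1 ∧ p.2 ≤ b) := by
      intro h
      exact hpJ (Finset.mem_filter.mpr ⟨hpI, h⟩)
    obtain ⟨z, hz1, hz2⟩ := hinter p hpI
    rw [Finset.mem_union, Finset.mem_filter, Finset.mem_filter]
    rcases not_and_or.mp hnot with h | h
    · push_neg at h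
      left
      exact ⟨hpI, le_of_lt h, le_trans hz2.1 hz1.2⟩
    · push_neg at h
      right
      exact ⟨hpI, le_trans hz1.1 hz2.2, le_of_lt h⟩
  have hcardsd : (I \ J).card ≤ 2 := by
    calc (I \ J).card ≤ _ := Finset.card_le_card hsdiff
      _ ≤ _ + _ := Finset.card_union_le _ _
      _ ≤ 1 + 1 := Nat.add_le_add (hone a) (hone b)
  have hIcard : I.card ≤ J.card + 2 := by
    have h := Finset.card_sdiff_add_card_eq_card hJsub
    omega
  have hJle : (J.card : ℝ) ≤ s / ℓ := by
    rw [le_div_iff₀ hℓ]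
    exact hkey
  calc (I.card : ℝ) ≤ (J.card : ℝ) + 2 := by exact_mod_cast hIcard
    _ ≤ s / ℓ + 2 := by linarith
end

section
/- Let D : ℝ × ℝ → ℝ be a monotonic distance function satisfying the reverse triangle inequality, such that for each fixed x the map y ↦ D(x,y) is continuous. Let a ≤ b with D(a,b) = s > 0 and let 0 < ε ≤ 1. Then there exist points a = x₀ ≤ x₁ ≤ ⋯ ≤ x_r ≤ b with r ≤ 1/ε such that D(xᵢ, xᵢ₊₁) = εs for all 0 ≤ i ≤ r−1 and D(x_r, b) ≤ εs. -/
theorem interval_packing_constructive (D : ℝ → ℝ → ℝ)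
    (hmono : ∀ a b c : ℝ, a < b → b < c →
      (0 ≤ D a b ∧ D a b < D a c) ∧ (0 ≤ D b c ∧ D b c < D a c))
    (hrefl : ∀ x y : ℝ, D x y = 0 ↔ x = y)
    (hrti : ∀ a b c : ℝ, a ≤ b → b ≤ c → D a b + D b c ≤ D a c)
    (hcont : ∀ x : ℝ, Continuous (D x))
    (a b s ε : ℝ) (hab : a ≤ b) (hs : D a b = s) (hspos : 0 < s)
    (hε0 : 0 < ε) (hε1 : ε ≤ 1) :
    ∃ (r : ℕ) (x : ℕ → ℝ), (r : ℝ) ≤ 1 / ε ∧ x 0 = a ∧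
      (∀ i, i < r → x i ≤ x (i + 1)) ∧ x r ≤ b ∧
      (∀ i, i < r → D (x i) (x (i + 1)) = ε * s) ∧
      D (x r) b ≤ ε * s := by
  have hDself : ∀ u : ℝ, D u u = 0 := fun u => (hrefl u u).mpr rfl
  have hDnn : ∀ u v : ℝ, u ≤ v → 0 ≤ D u v := by
    intro u v huv
    rcases eq_or_lt_of_le huv with h | h
    · rw [h, hDself]
    · exact ((hmono u v (v + 1) h (by linarith)).1).1
  have hεs : 0 < ε * s := mul_pos hε0 hspos
  -- lower bound on total distance of a chain
  have sumlem : ∀ (r : ℕ) (x : ℕ → ℝ), (∀ i, i < r → x i ≤ x (i + 1)) →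
      (∀ i, i < r → D (x i) (x (i + 1)) = ε * s) →
      (r : ℝ) * (ε * s) ≤ D (x 0) (x r) ∧ x 0 ≤ x r := by
    intro r
    induction r with
    | zero => intro x _ _; exact ⟨by simp [hDself], le_refl _⟩
    | succ n ih =>
      intro x hm he
      obtain ⟨h1, h2⟩ := ih x (fun i hi => hm i (by omega)) (fun i hi => he i (by omega))
      have h3 : x n ≤ x (n + 1) := hm n (by omega)
      have h4 := hrti (x 0) (x n) (x (n + 1)) h2 h3
      have h5 := he n (Nat.lt_succ_self n)
      constructor
      · push_cast; nlinarith
      · linarith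
  have key : ∀ n : ℕ,
      (∃ r ≤ n, ∃ x : ℕ → ℝ, x 0 = a ∧ (∀ i, i < r → x i ≤ x (i + 1)) ∧ x r ≤ b ∧
        (∀ i, i < r → D (x i) (x (i + 1)) = ε * s) ∧ D (x r) b ≤ ε * s) ∨
      (∃ x : ℕ → ℝ, x 0 = a ∧ (∀ i, i < n → x i ≤ x (i + 1)) ∧ x n ≤ b ∧
        (∀ i, i < n → D (x i) (x (i + 1)) = ε * s)) := by
    intro n
    induction n with
    | zero =>
      right
      exact ⟨fun _ => a, rfl, fun i hi => absurd hi (Nat.not_lt_zero i), hab,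
        fun i hi => absurd hi (Nat.not_lt_zero i)⟩
    | succ n ih =>
      rcases ih with ⟨r, hr, hx⟩ | ⟨x, h0, hmonx, hxb, heq⟩
      · exact Or.inl ⟨r, le_trans hr (Nat.le_succ n), hx⟩
      · by_cases hstop : D (x n) b ≤ ε * s
        · exact Or.inl ⟨n, Nat.le_succ n, x, h0, hmonx, hxb, heq, hstop⟩
        · push_neg at hstop
          have hc : ContinuousOn (D (x n)) (Set.Icc (x n) b) := (hcont (x n)).continuousOn
          have hmem : ε * s ∈ Set.Icc (D (x n) (x n)) (D (x n) b) :=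
            ⟨by rw [hDself]; exact le_of_lt hεs, le_of_lt hstop⟩
          obtain ⟨y, hy, hyD⟩ := intermediate_value_Icc hxb hc hmem
          right
          refine ⟨fun i => if i ≤ n then x i else y, ?_, ?_, ?_, ?_⟩
          · simpa using h0
          · intro i hi
            by_cases h1 : i + 1 ≤ n
            · simp only [if_pos (by omega : i ≤ n), if_pos h1]
              exact hmonx i (by omega)
            · have hin : i = n := by omega
              subst hin
              simp only [if_pos (le_refl i), if_neg (by omega : ¬ i + 1 ≤ i)]
              exact hy.1
          · simp only [if_neg (by omega : ¬ n + 1 ≤ n)]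
            exact hy.2
          · intro i hi
            by_cases h1 : i + 1 ≤ n
            · simp only [if_pos (by omega : i ≤ n), if_pos h1]
              exact heq i (by omega)
            · have hin : i = n := by omega
              subst hin
              simp only [if_pos (le_refl i), if_neg (by omega : ¬ i + 1 ≤ i)]
              exact hyD
  obtain ⟨N, hN⟩ := exists_nat_gt (1 / ε)
  rcases key N with ⟨r, _, x, h0, hmonx, hxb, heq, hstop⟩ | ⟨x, h0, hmonx, hxb, heq⟩
  · refine ⟨r, x, ?_, h0, hmonx, hxb, heq, hstop⟩
    obtain ⟨h1, h2⟩ := sumlem r x hmonx heq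
    rw [h0] at h1 h2
    have h3 := hrti a (x r) b h2 hxb
    have h4 := hDnn (x r) b hxb
    rw [hs] at h3
    rw [le_div_iff₀ hε0]
    nlinarith
  · exfalso
    obtain ⟨h1, h2⟩ := sumlem N x hmonx heq
    rw [h0] at h1 h2
    have h3 := hrti a (x N) b h2 hxb
    have h4 := hDnn (x N) b hxb
    rw [hs] at h3
    rw [div_lt_iff₀ hε0] at hN
    nlinarith
end

section
/- Let φ : ℝ → ℝ be differentiable and strictly convex, with Bregman divergence Dφ. Let a ≤ b with √Dφ(a,b) = s, let ℓ > 0, and let I be a finite collection of pairwise disjoint closed intervals [x, x'], each intersecting [a,b] and each satisfying √Dφ(x,x') ≥ ℓ. Then the number of intervals in I is at most s²/ℓ² + 2. -/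
lemma bregman_nonneg (φ : ℝ → ℝ) (hdiff : Differentiable ℝ φ)
    (hconv : StrictConvexOn ℝ Set.univ φ) (x y : ℝ) : 0 ≤ bregman φ x y := by
  rcases lt_trichotomy x y with h | h | h
  · have := hconv.convexOn.slope_le_deriv (Set.mem_univ x) (Set.mem_univ y) h
      (hdiff y)
    rw [slope_def_field] at this
    have hyx : 0 < y - x := by linarith
    unfold bregman
    rw [div_le_iff₀ hyx] at this
    nlinarith
  · simp [bregman, h]
  · have := hconv.convexOn.deriv_le_slope (Set.mem_univ y) (Set.mem_univ x) h
      (hdiff y)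
    rw [slope_def_field] at this
    have hxy : 0 < x - y := by linarith
    unfold bregman
    rw [le_div_iff₀ hxy] at this
    nlinarith

lemma bregman_superadd (φ : ℝ → ℝ) (hdiff : Differentiable ℝ φ)
    (hconv : StrictConvexOn ℝ Set.univ φ) {x y z : ℝ} (hxy : x ≤ y) (hyz : y ≤ z) :
    bregman φ x y + bregman φ y z ≤ bregman φ x z := by
  have hmono : ∀ u v : ℝ, u ≤ v → deriv φ u ≤ deriv φ v := by
    intro u v huv
    rcases eq_or_lt_of_le huv with h | h
    · simp [h]
    · exact le_of_lt (hconv.strictMonoOn_deriv (fun w _ => hdiff w)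
        (by simp) (by simp) h)
  have h1 : deriv φ y ≤ deriv φ z := hmono y z hyz
  have h2 : x - y ≤ 0 := by linarith
  unfold bregman
  nlinarith [mul_nonneg (neg_nonneg.mpr h2) (sub_nonneg.mpr h1)]

/-- Sum of Bregman divergences over disjoint subintervals of `[a,c]`. -/
lemma bregman_sum_le (φ : ℝ → ℝ) (hdiff : Differentiable ℝ φ)
    (hconv : StrictConvexOn ℝ Set.univ φ) (a : ℝ) :
    ∀ J : Finset (ℝ × ℝ), ∀ c : ℝ, a ≤ c →
    (∀ p ∈ J, p.1 ≤ p.2) →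
    (∀ p ∈ J, ∀ q ∈ J, p ≠ q → Disjoint (Set.Icc p.1 p.2) (Set.Icc q.1 q.2)) →
    (∀ p ∈ J, a ≤ p.1 ∧ p.2 ≤ c) →
    ∑ p ∈ J, bregman φ p.1 p.2 ≤ bregman φ a c := by
  intro J
  induction J using Finset.strongInduction with
  | _ J ih =>
    intro c hac hval hdis hsub
    rcases J.eq_empty_or_nonempty with rfl | hne
    · simpa using bregman_nonneg φ hdiff hconv a c
    · obtain ⟨p, hp, hpmax⟩ := J.exists_max_image (fun p => p.2) hne
      have hq2 : ∀ q ∈ J.erase p, q.2 ≤ p.1 := by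
        intro q hq
        have hqJ := Finset.mem_of_mem_erase hq
        have hqp : q ≠ p := Finset.ne_of_mem_erase hq
        have hd := hdis q hqJ p hp hqp
        have hq12 := hval q hqJ
        have hp12 := hval p hp
        by_contra hlt
        push_neg at hlt
        -- p.1 < q.2, and q.2 ≤ p.2 from maximality, so max p.1 q.1 is in both
        have hq2p2 : q.2 ≤ p.2 := hpmax q hqJ
        have hx : max p.1 q.1 ∈ Set.Icc q.1 q.2 ∩ Set.Icc p.1 p.2 := by
          constructor
          · exact ⟨le_max_right _ _, max_le (le_of_lt hlt) hq12⟩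
          · exact ⟨le_max_left _ _, max_le (le_trans hp12 (le_refl _) |>.trans (le_refl _) |>.trans_eq rfl |>.trans (le_refl _) |> fun _ => hp12) (hq2p2.trans' hq12 |>.trans (le_refl _))⟩
        exact Set.disjoint_left.mp hd hx.1 hx.2
      have hap1 : a ≤ p.1 := (hsub p hp).1
      have hrec := ih (J.erase p) (Finset.erase_ssubset hp) p.1 hap1
        (fun q hq => hval q (Finset.mem_of_mem_erase hq))
        (fun q hq r hr hqr => hdis q (Finset.mem_of_mem_erase hq) r (Finset.mem_of_mem_erase hr) hqr)
        (fun q hq => ⟨(hsub q (Finset.mem_of_mem_erase hq)).1, hq2 q hq⟩)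
      have hsum : ∑ q ∈ J, bregman φ q.1 q.2
          = ∑ q ∈ J.erase p, bregman φ q.1 q.2 + bregman φ p.1 p.2 := by
        rw [Finset.sum_erase_add _ _ hp]
      rw [hsum]
      have h1 : bregman φ a p.1 + bregman φ p.1 p.2 ≤ bregman φ a p.2 :=
        bregman_superadd φ hdiff hconv hap1 (hval p hp)
      have h2 : bregman φ a p.2 + bregman φ p.2 c ≤ bregman φ a c :=
        bregman_superadd φ hdiff hconv (hap1.trans (hval p hp)) (hsub p hp).2
      have h3 := bregman_nonneg φ hdiff hconv p.2 c
      linarith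

theorem weak_interval_packing (φ : ℝ → ℝ) (hdiff : Differentiable ℝ φ)
    (hconv : StrictConvexOn ℝ Set.univ φ)
    (a b s ℓ : ℝ) (hab : a ≤ b) (hs : Real.sqrt (bregman φ a b) = s) (hℓ : 0 < ℓ)
    (I : Finset (ℝ × ℝ))
    (hvalid : ∀ p ∈ I, p.1 ≤ p.2)
    (hdisj : ∀ p ∈ I, ∀ q ∈ I, p ≠ q → Disjoint (Set.Icc p.1 p.2) (Set.Icc q.1 q.2))
    (hinter : ∀ p ∈ I, (Set.Icc p.1 p.2 ∩ Set.Icc a b).Nonempty)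
    (hlen : ∀ p ∈ I, ℓ ≤ Real.sqrt (bregman φ p.1 p.2)) :
    (I.card : ℝ) ≤ s ^ 2 / ℓ ^ 2 + 2 := by
  classical
  set G := I.filter (fun p => a ≤ p.1 ∧ p.2 ≤ b) with hG
  set Bad := I \ G with hBad
  -- Bad intervals contain a or b
  have hbadsub : Bad ⊆ (I.filter (fun p => a ∈ Set.Icc p.1 p.2)) ∪
      (I.filter (fun p => b ∈ Set.Icc p.1 p.2)) := by
    intro p hp
    rw [hBad, Finset.mem_sdiff, hG, Finset.mem_filter] at hp
    obtain ⟨hpI, hpn⟩ := hp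
    push_neg at hpn
    obtain ⟨t, ht1, ht2⟩ := hinter p hpI
    rcases lt_or_ge p.1 a with h | h
    · apply Finset.mem_union_left
      rw [Finset.mem_filter]
      exact ⟨hpI, ⟨le_of_lt h, le_trans ht2.1 ht1.2⟩⟩
    · have hb : b < p.2 := lt_of_not_ge fun hc => absurd hc (not_le.mpr (hpn hpI h))
      apply Finset.mem_union_right
      rw [Finset.mem_filter]
      exact ⟨hpI, ⟨le_trans ht1.1 ht2.2, le_of_lt hb⟩⟩
  -- each filter has card ≤ 1
  have hcard1 : ∀ x : ℝ, (I.filter (fun p => x ∈ Set.Icc p.1 p.2)).card ≤ 1 := by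
    intro x
    apply Finset.card_le_one.mpr
    intro p hp q hq
    rw [Finset.mem_filter] at hp hq
    by_contra hne
    exact Set.disjoint_left.mp (hdisj p hp.1 q hq.1 hne) hp.2 hq.2
  have hbadcard : Bad.card ≤ 2 := by
    calc Bad.card ≤ _ := Finset.card_le_card hbadsub
      _ ≤ _ + _ := Finset.card_union_le _ _
      _ ≤ 1 + 1 := add_le_add (hcard1 a) (hcard1 b)
  -- sum over good intervals
  have hGsub : ∀ p ∈ G, a ≤ p.1 ∧ p.2 ≤ b := by
    intro p hp; rw [hG, Finset.mem_filter] at hp; exact hp.2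
  have hGsum : ∑ p ∈ G, bregman φ p.1 p.2 ≤ bregman φ a b :=
    bregman_sum_le φ hdiff hconv a G b hab
      (fun p hp => hvalid p (Finset.mem_of_mem_filter p hp))
      (fun p hp q hq hpq => hdisj p (Finset.mem_of_mem_filter p hp)
        q (Finset.mem_of_mem_filter q hq) hpq)
      hGsub
  have hl2 : ∀ p ∈ G, ℓ ^ 2 ≤ bregman φ p.1 p.2 := by
    intro p hp
    have hpI := Finset.mem_of_mem_filter p hp
    have h := hlen p hpI
    have hnn := bregman_nonneg φ hdiff hconv p.1 p.2
    nlinarith [Real.sq_sqrt hnn, Real.sqrt_nonneg (bregman φ p.1 p.2)]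
  have hGlow : (G.card : ℝ) * ℓ ^ 2 ≤ bregman φ a b := by
    calc (G.card : ℝ) * ℓ ^ 2 = ∑ _p ∈ G, ℓ ^ 2 := by
          rw [Finset.sum_const, nsmul_eq_mul]
      _ ≤ ∑ p ∈ G, bregman φ p.1 p.2 := Finset.sum_le_sum hl2
      _ ≤ bregman φ a b := hGsum
  have hs2 : bregman φ a b = s ^ 2 := by
    rw [← hs, Real.sq_sqrt (bregman_nonneg φ hdiff hconv a b)]
  have hGcard : (G.card : ℝ) ≤ s ^ 2 / ℓ ^ 2 := by
    rw [le_div_iff₀ (by positivity)]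
    rw [hs2] at hGlow
    exact hGlow
  have hIsplit : I.card = G.card + Bad.card := by
    rw [hBad]
    rw [Finset.card_sdiff_of_subset (Finset.filter_subset _ _), ← hG]
    have := Finset.card_le_card (hG ▸ Finset.filter_subset (fun p => a ≤ p.1 ∧ p.2 ≤ b) I : G ⊆ I)
    omega
  have : (I.card : ℝ) = (G.card : ℝ) + (Bad.card : ℝ) := by
    rw [hIsplit]; push_cast; ring
  rw [this]
  have : (Bad.card : ℝ) ≤ 2 := by exact_mod_cast hbadcard
  linarith
end

section
/- Let D be a nonnegative symmetric μ-defective distance on a set M with μ ≥ 1 (so |D(a,q) − D(b,q)| < μ·D(a,b) for all a, b, q ∈ M with a ≠ b), let t > 0 and r > 0, and let w, p, q ∈ M be distinct points with D(w,q) > (1 + t/2)·r and D(w,p) < r. Then D(q,p) > (t/(2μ))·r, and D(w,q) < (1 + 2μ²/t)·D(q,p). -/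
theorem ring_search_case_one {M : Type*} (μ : ℝ) (hμ : 1 ≤ μ)
    (D : M → M → ℝ)
    (hnonneg : ∀ a b, 0 ≤ D a b)
    (hsymm : ∀ a b, D a b = D b a)
    (hdef : ∀ a b q : M, a ≠ b → |D a q - D b q| < μ * D a b)
    (t r : ℝ) (ht : 0 < t) (hr : 0 < r)
    (w p q : M) (hwp : w ≠ p) (hwq : w ≠ q) (hpq : p ≠ q)
    (hout : D w q > (1 + t / 2) * r) (hin : D w p < r) :
    D q p > (t / (2 * μ)) * r ∧ D w q < (1 + 2 * μ ^ 2 / t) * D q p := by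
  have hμ0 : (0:ℝ) < μ := lt_of_lt_of_le one_pos hμ
  have h1 := hdef q p w hpq.symm
  have h2 := hdef w p q hwp
  rw [abs_lt] at h1 h2
  have hqw : D q w = D w q := hsymm q w
  have hpw : D p w = D w p := hsymm p w
  have hlow : μ * D q p > (t / 2) * r := by nlinarith [h1.2]
  have hfirst : D q p > (t / (2 * μ)) * r := by
    rw [gt_iff_lt, div_mul_eq_mul_div, div_lt_iff₀ (by positivity : (0:ℝ) < 2*μ)]
    nlinarith
  refine ⟨hfirst, ?_⟩
  -- D w q < D p q + μ * D w p < D q p + μ * r < D q p + μ * (2μ/t) D q p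
  have hμr : μ * r < 2 * μ ^ 2 / t * D q p := by
    rw [div_mul_eq_mul_div, lt_div_iff₀ ht]
    nlinarith
  have hpq' : D p q = D q p := hsymm p q
  nlinarith [h2.2, hnonneg w p]
end

section
/- Let D be a nonnegative symmetric μ-defective distance on a set M with μ ≥ 1 (so |D(a,q) − D(b,q)| < μ·D(a,b) for all a, b, q ∈ M with a ≠ b), let t > 0 and r > 0, and let w, p, q ∈ M be distinct points with D(w,q) < (1 + t/2)·r and D(w,p) > (1 + t)·r. Then D(q,p) > (t/(2μ))·r, and D(w,q) < (μ + 2μ/t)·D(q,p). -/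
theorem ring_search_case_two {M : Type*} (μ : ℝ) (hμ : 1 ≤ μ)
    (D : M → M → ℝ)
    (hnonneg : ∀ a b, 0 ≤ D a b)
    (hsymm : ∀ a b, D a b = D b a)
    (hdef : ∀ a b q : M, a ≠ b → |D a q - D b q| < μ * D a b)
    (t r : ℝ) (ht : 0 < t) (hr : 0 < r)
    (w p q : M) (hwp : w ≠ p) (hwq : w ≠ q) (hpq : p ≠ q)
    (hin : D w q < (1 + t / 2) * r) (hout : D w p > (1 + t) * r) :
    D q p > (t / (2 * μ)) * r ∧ D w q < (μ + 2 * μ / t) * D q p := by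
  have hμ0 : (0:ℝ) < μ := lt_of_lt_of_le one_pos hμ
  have h1 := hdef p q w hpq
  rw [abs_lt] at h1
  have e1 : D p w = D w p := hsymm p w
  have e2 : D q w = D w q := hsymm q w
  have e3 : D q p = D p q := hsymm q p
  have key : (t / 2) * r < μ * D q p := by
    rw [e3]; nlinarith [h1.1]
  constructor
  · rw [div_mul_eq_mul_div, gt_iff_lt, div_lt_iff₀ (by positivity)]
    nlinarith
  · have h2 : t * r < 2 * (μ * D q p) := by nlinarith
    rw [show μ + 2 * μ / t = (μ * t + 2 * μ) / t by field_simp,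
      div_mul_eq_mul_div, lt_div_iff₀ ht]
    nlinarith [mul_lt_mul_of_pos_left hin ht, mul_lt_mul_of_pos_left h2 (by linarith : (0:ℝ) < 1 + t/2)]
end

section
/- Let φ be twice continuously differentiable on [x₁, x₂] (with x₁ < x₂) with 0 < m ≤ φ''(x) ≤ M on [x₁, x₂], and let c₀ = √(M/m). Let r_φ = √Dsφ(x₁, x₂), and for an integer k ≥ 1 let aᵢ = x₁ + i·(x₂ − x₁)/k for i = 0, 1, …, k be the endpoints of the subdivision of [x₁, x₂] into k subintervals of equal Euclidean length. Then for every 0 ≤ i ≤ k−1: r_φ/(c₀·k) ≤ √Dsφ(aᵢ, aᵢ₊₁) ≤ c₀·r_φ/k. -/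
lemma sbregman_bounds (φ : ℝ → ℝ) (x₁ x₂ : ℝ) (hd2 : Differentiable ℝ (deriv φ))
    (m M : ℝ)
    (hbound : ∀ x ∈ Set.Icc x₁ x₂, m ≤ deriv (deriv φ) x ∧ deriv (deriv φ) x ≤ M)
    (u v : ℝ) (huv : u < v) (hu : x₁ ≤ u) (hv : v ≤ x₂) :
    m / 2 * (v - u) ^ 2 ≤ sbregman φ u v ∧ sbregman φ u v ≤ M / 2 * (v - u) ^ 2 := by
  obtain ⟨ξ, hξ, hslope⟩ := exists_hasDerivAt_eq_slope (deriv φ) (deriv (deriv φ)) huv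
    hd2.continuous.continuousOn (fun x _ => (hd2 x).hasDerivAt)
  have hξI : ξ ∈ Set.Icc x₁ x₂ := ⟨hu.trans hξ.1.le, hξ.2.le.trans hv⟩
  obtain ⟨h1, h2⟩ := hbound ξ hξI
  have hne : v - u ≠ 0 := by linarith
  have heq : deriv φ v - deriv φ u = deriv (deriv φ) ξ * (v - u) := by
    field_simp at hslope; linarith [hslope]
  have : sbregman φ u v = 1 / 2 * deriv (deriv φ) ξ * (v - u) ^ 2 := by
    unfold sbregman; nlinarith [heq]
  constructor <;> nlinarith [sq_nonneg (v - u), huv]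

theorem sqrt_sbregman_equal_subdivision (φ : ℝ → ℝ) (x₁ x₂ : ℝ) (hlt : x₁ < x₂)
    (hd1 : Differentiable ℝ φ) (hd2 : Differentiable ℝ (deriv φ))
    (hcont : ContinuousOn (deriv (deriv φ)) (Set.Icc x₁ x₂))
    (m M : ℝ) (hm : 0 < m)
    (hbound : ∀ x ∈ Set.Icc x₁ x₂, m ≤ deriv (deriv φ) x ∧ deriv (deriv φ) x ≤ M)
    (c₀ : ℝ) (hc₀ : c₀ = Real.sqrt (M / m))
    (rφ : ℝ) (hr : rφ = Real.sqrt (sbregman φ x₁ x₂))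
    (k : ℕ) (hk : 1 ≤ k)
    (a : ℕ → ℝ) (ha : ∀ i : ℕ, a i = x₁ + i * (x₂ - x₁) / k) :
    ∀ i : ℕ, i < k →
      rφ / (c₀ * k) ≤ Real.sqrt (sbregman φ (a i) (a (i + 1))) ∧
      Real.sqrt (sbregman φ (a i) (a (i + 1))) ≤ c₀ * rφ / k := by
  intro i hik
  have hk0 : (0:ℝ) < k := by exact_mod_cast hk
  have hd : (0:ℝ) < x₂ - x₁ := by linarith
  have hmM : m ≤ M := by
    have := hbound x₁ ⟨le_refl _, hlt.le⟩; linarith [this.1, this.2]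
  have hM : 0 < M := hm.trans_le hmM
  -- global bounds
  obtain ⟨hS1, hS2⟩ := sbregman_bounds φ x₁ x₂ hd2 m M hbound x₁ x₂ hlt le_rfl le_rfl
  -- local bounds
  have hai : a i = x₁ + i * (x₂ - x₁) / k := ha i
  have hai1 : a (i + 1) = x₁ + (i + 1 : ℕ) * (x₂ - x₁) / k := ha (i + 1)
  have hdiff : a (i + 1) - a i = (x₂ - x₁) / k := by
    rw [hai, hai1]; push_cast; field_simp; ring
  have hlti : a i < a (i + 1) := by
    have : (0:ℝ) < (x₂ - x₁) / k := by positivity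
    linarith [hdiff]
  have hlow : x₁ ≤ a i := by
    rw [hai]
    have : (0:ℝ) ≤ i * (x₂ - x₁) / k := by positivity
    linarith
  have hhigh : a (i + 1) ≤ x₂ := by
    rw [hai1]
    have h1 : ((i:ℝ) + 1) ≤ k := by exact_mod_cast hik
    have : ((i + 1 : ℕ):ℝ) * (x₂ - x₁) / k ≤ (x₂ - x₁) := by
      rw [div_le_iff₀ hk0]; push_cast
      nlinarith
    linarith
  obtain ⟨hSi1, hSi2⟩ := sbregman_bounds φ x₁ x₂ hd2 m M hbound (a i) (a (i + 1)) hlti hlow hhigh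
  rw [hdiff] at hSi1 hSi2
  have hS0 : 0 ≤ sbregman φ x₁ x₂ := le_trans (by positivity) hS1
  have hSi0 : 0 ≤ sbregman φ (a i) (a (i + 1)) := le_trans (by positivity) hSi1
  have hc₀pos : 0 < c₀ := by
    rw [hc₀]; exact Real.sqrt_pos.2 (by positivity)
  have hc₀sq : c₀ ^ 2 = M / m := by rw [hc₀]; exact Real.sq_sqrt (by positivity)
  have hrsq : rφ ^ 2 = sbregman φ x₁ x₂ := by rw [hr]; exact Real.sq_sqrt hS0
  have hrpos : 0 ≤ rφ := by rw [hr]; exact Real.sqrt_nonneg _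
  have hδ : ((x₂ - x₁) / k) ^ 2 = (x₂ - x₁) ^ 2 / k ^ 2 := by ring
  constructor
  · rw [Real.le_sqrt (by positivity) hSi0]
    have key : (rφ / (c₀ * k)) ^ 2 = sbregman φ x₁ x₂ / (M / m * k ^ 2) := by
      rw [div_pow, mul_pow, hrsq, hc₀sq]
    rw [key]
    rw [div_le_iff₀ (by positivity)]
    rw [hδ] at hSi1 hSi2
    have hk2 : (0:ℝ) < (k:ℝ) ^ 2 := by positivity
    -- S ≤ M/2 d²  and  m/2 d²/k² ≤ Sᵢ
    have h1 : sbregman φ x₁ x₂ ≤ M / 2 * (x₂ - x₁) ^ 2 := hS2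
    have h2 : m / 2 * ((x₂ - x₁) ^ 2 / k ^ 2) ≤ sbregman φ (a i) (a (i + 1)) := hSi1
    have hMm : 0 < M / m := by positivity
    have h3 : M / 2 * (x₂ - x₁) ^ 2 ≤ sbregman φ (a i) (a (i + 1)) * (M / m * (k:ℝ) ^ 2) := by
      have h4 := mul_le_mul_of_nonneg_right h2
        (le_of_lt (show (0:ℝ) < M / m * (k:ℝ) ^ 2 by positivity))
      have h5 : m / 2 * ((x₂ - x₁) ^ 2 / (k:ℝ) ^ 2) * (M / m * (k:ℝ) ^ 2)
          = M / 2 * (x₂ - x₁) ^ 2 := by field_simp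
      linarith
    linarith
  · rw [Real.sqrt_le_iff]
    constructor
    · positivity
    · have key : (c₀ * rφ / k) ^ 2 = M / m * sbregman φ x₁ x₂ / k ^ 2 := by
        rw [div_pow, mul_pow, hrsq, hc₀sq]
      rw [key, le_div_iff₀ (by positivity : (0:ℝ) < (k:ℝ) ^ 2)]
      rw [hδ] at hSi2
      have e1 : sbregman φ (a i) (a (i + 1)) * (k:ℝ) ^ 2 ≤ M / 2 * (x₂ - x₁) ^ 2 := by
        have h4 := mul_le_mul_of_nonneg_right hSi2 (sq_nonneg (k:ℝ))
        have h5 : M / 2 * ((x₂ - x₁) ^ 2 / (k:ℝ) ^ 2) * (k:ℝ) ^ 2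
            = M / 2 * (x₂ - x₁) ^ 2 := by field_simp
        linarith
      have e2 : M / 2 * (x₂ - x₁) ^ 2 ≤ M / m * sbregman φ x₁ x₂ := by
        have h4 := mul_le_mul_of_nonneg_left hS1
          (le_of_lt (show (0:ℝ) < M / m by positivity))
        have h5 : M / m * (m / 2 * (x₂ - x₁) ^ 2) = M / 2 * (x₂ - x₁) ^ 2 := by
          field_simp
        linarith
      linarith
end

section
/- Let φ be twice continuously differentiable on an interval I with 0 < m ≤ φ''(x) ≤ M for all x ∈ I, and let c₀ = √(M/m). Let [x₁, x₂] ⊆ I with √Dφ(x₁, x₂) = r > 0, let l > 0, and let I' be a finite collection of pairwise disjoint closed intervals [a, a'] ⊆ I, each intersecting [x₁, x₂] and each satisfying √Dφ(a, a') ≥ l. Then the number of intervals in I' is at most c₀·r/l + 2. -/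
lemma tangent_le_of_convexOn {f : ℝ → ℝ} {S : Set ℝ} (hfc : ConvexOn ℝ S f)
    (hd : Differentiable ℝ f) {a b : ℝ} (ha : a ∈ S) (hb : b ∈ S) :
    0 ≤ f a - f b - deriv f b * (a - b) := by
  rcases lt_trichotomy a b with h | h | h
  · have h1 := hfc.slope_le_deriv ha hb h (hd b)
    rw [slope_def_field, div_le_iff₀ (by linarith)] at h1
    nlinarith
  · simp [h]
  · have h1 := hfc.deriv_le_slope hb ha h (hd b)
    rw [slope_def_field, le_div_iff₀ (by linarith)] at h1
    nlinarith

lemma bregman_lower_s19 (φ : ℝ → ℝ) (I : Set ℝ) (hI : Convex ℝ I)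
    (hd1 : Differentiable ℝ φ) (hd2 : Differentiable ℝ (deriv φ))
    (c : ℝ) (hc : ∀ x ∈ I, c ≤ deriv (deriv φ) x)
    {a b : ℝ} (ha : a ∈ I) (hb : b ∈ I) :
    c / 2 * (a - b) ^ 2 ≤ bregman φ a b := by
  set h : ℝ → ℝ := fun x => φ x - c / 2 * x ^ 2 with hh
  have hq : ∀ x : ℝ, HasDerivAt (fun x : ℝ => c / 2 * x ^ 2) (c * x) x := by
    intro x
    have := (hasDerivAt_pow 2 x).const_mul (c / 2)
    refine this.congr_deriv ?_
    push_cast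
    ring
  have hder : ∀ x, HasDerivAt h (deriv φ x - c * x) x := fun x =>
    ((hd1 x).hasDerivAt.sub (hq x))
  have hder2 : ∀ x, HasDerivAt (fun x => deriv φ x - c * x) (deriv (deriv φ) x - c) x := by
    intro x
    have hcx : HasDerivAt (fun x : ℝ => c * x) c x := by
      simpa using (hasDerivAt_id x).const_mul c
    exact (hd2 x).hasDerivAt.sub hcx
  have hdiff : Differentiable ℝ h := fun x => (hder x).differentiableAt
  have hconv : ConvexOn ℝ I h := by
    apply convexOn_of_hasDerivWithinAt2_nonneg hI hdiff.continuous.continuousOn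
      (fun x _ => (hder x).hasDerivWithinAt)
      (fun x _ => (hder2 x).hasDerivWithinAt)
    intro x hx
    have := hc x (interior_subset hx)
    linarith
  have hnn := tangent_le_of_convexOn hconv hdiff ha hb
  have hderb : deriv h b = deriv φ b - c * b := (hder b).deriv
  have key : bregman φ a b - c / 2 * (a - b) ^ 2 = h a - h b - deriv h b * (a - b) := by
    rw [hderb]
    simp only [hh, bregman]
    ring
  have h2 := key.symm ▸ hnn
  linarith

lemma bregman_upper (φ : ℝ → ℝ) (I : Set ℝ) (hI : Convex ℝ I)
    (hd1 : Differentiable ℝ φ) (hd2 : Differentiable ℝ (deriv φ))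
    (c : ℝ) (hc : ∀ x ∈ I, deriv (deriv φ) x ≤ c)
    {a b : ℝ} (ha : a ∈ I) (hb : b ∈ I) :
    bregman φ a b ≤ c / 2 * (a - b) ^ 2 := by
  set h : ℝ → ℝ := fun x => c / 2 * x ^ 2 - φ x with hh
  have hq : ∀ x : ℝ, HasDerivAt (fun x : ℝ => c / 2 * x ^ 2) (c * x) x := by
    intro x
    have := (hasDerivAt_pow 2 x).const_mul (c / 2)
    refine this.congr_deriv ?_
    push_cast
    ring
  have hder : ∀ x, HasDerivAt h (c * x - deriv φ x) x := fun x =>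
    ((hq x).sub (hd1 x).hasDerivAt)
  have hder2 : ∀ x, HasDerivAt (fun x => c * x - deriv φ x) (c - deriv (deriv φ) x) x := by
    intro x
    have hcx : HasDerivAt (fun x : ℝ => c * x) c x := by
      simpa using (hasDerivAt_id x).const_mul c
    exact hcx.sub (hd2 x).hasDerivAt
  have hdiff : Differentiable ℝ h := fun x => (hder x).differentiableAt
  have hconv : ConvexOn ℝ I h := by
    apply convexOn_of_hasDerivWithinAt2_nonneg hI hdiff.continuous.continuousOn
      (fun x _ => (hder x).hasDerivWithinAt)
      (fun x _ => (hder2 x).hasDerivWithinAt)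
    intro x hx
    have := hc x (interior_subset hx)
    linarith
  have hnn := tangent_le_of_convexOn hconv hdiff ha hb
  have hderb : deriv h b = c * b - deriv φ b := (hder b).deriv
  have key : c / 2 * (a - b) ^ 2 - bregman φ a b = h a - h b - deriv h b * (a - b) := by
    rw [hderb]
    simp only [hh, bregman]
    ring
  have h2 := key.symm ▸ hnn
  linarith

theorem sqrt_bregman_interval_packing (φ : ℝ → ℝ) (I : Set ℝ) (hI : Convex ℝ I)
    (hd1 : Differentiable ℝ φ) (hd2 : Differentiable ℝ (deriv φ))
    (hcont : ContinuousOn (deriv (deriv φ)) I)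
    (m M : ℝ) (hm : 0 < m)
    (hbound : ∀ x ∈ I, m ≤ deriv (deriv φ) x ∧ deriv (deriv φ) x ≤ M)
    (c₀ : ℝ) (hc₀ : c₀ = Real.sqrt (M / m))
    (x₁ x₂ : ℝ) (hle : x₁ ≤ x₂) (hsub : Set.Icc x₁ x₂ ⊆ I)
    (r l : ℝ) (hr : Real.sqrt (bregman φ x₁ x₂) = r) (hrpos : 0 < r) (hl : 0 < l)
    (I' : Finset (ℝ × ℝ))
    (hvalid : ∀ p ∈ I', p.1 ≤ p.2)
    (hIsub : ∀ p ∈ I', Set.Icc p.1 p.2 ⊆ I)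
    (hdisj : ∀ p ∈ I', ∀ q ∈ I', p ≠ q → Disjoint (Set.Icc p.1 p.2) (Set.Icc q.1 q.2))
    (hinter : ∀ p ∈ I', (Set.Icc p.1 p.2 ∩ Set.Icc x₁ x₂).Nonempty)
    (hlen : ∀ p ∈ I', l ≤ Real.sqrt (bregman φ p.1 p.2)) :
    (I'.card : ℝ) ≤ c₀ * r / l + 2 := by
  classical
  have hx₁I : x₁ ∈ I := hsub ⟨le_refl _, hle⟩
  have hM : 0 < M := hm.trans_le ((hbound x₁ hx₁I).1.trans (hbound x₁ hx₁I).2)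
  have hsM : (0:ℝ) < Real.sqrt M := Real.sqrt_pos.2 hM
  have hsm : (0:ℝ) < Real.sqrt m := Real.sqrt_pos.2 hm
  have hs2 : (0:ℝ) < Real.sqrt 2 := by positivity
  set L : ℝ := l * Real.sqrt 2 / Real.sqrt M with hL
  have hLpos : 0 < L := by positivity
  -- length lower bound on each interval
  have hLen : ∀ p ∈ I', L ≤ p.2 - p.1 := by
    intro p hp
    have hmem1 : p.1 ∈ I := hIsub p hp ⟨le_refl _, hvalid p hp⟩
    have hmem2 : p.2 ∈ I := hIsub p hp ⟨hvalid p hp, le_refl _⟩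
    have h1 : bregman φ p.1 p.2 ≤ M / 2 * (p.1 - p.2) ^ 2 :=
      bregman_upper φ I hI hd1 hd2 M (fun x hx => (hbound x hx).2) hmem1 hmem2
    have h2 : l ≤ Real.sqrt (M / 2 * (p.1 - p.2) ^ 2) :=
      (hlen p hp).trans (Real.sqrt_le_sqrt h1)
    have hd0 : 0 ≤ p.2 - p.1 := sub_nonneg.2 (hvalid p hp)
    have h3 : Real.sqrt (M / 2 * (p.1 - p.2) ^ 2)
        = Real.sqrt M / Real.sqrt 2 * (p.2 - p.1) := by
      have : (p.1 - p.2) ^ 2 = (p.2 - p.1) ^ 2 := by ring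
      rw [this, Real.sqrt_mul (by positivity), Real.sqrt_sq hd0, Real.sqrt_div hM.le]
    rw [h3] at h2
    rw [hL, div_le_iff₀ hsM]
    rw [div_mul_eq_mul_div, le_div_iff₀ hs2] at h2
    nlinarith
  -- length upper bound on [x₁, x₂]
  have hX : x₂ - x₁ ≤ r * Real.sqrt 2 / Real.sqrt m := by
    have hmem2 : x₂ ∈ I := hsub ⟨hle, le_refl _⟩
    have h1 : m / 2 * (x₁ - x₂) ^ 2 ≤ bregman φ x₁ x₂ :=
      bregman_lower_s19 φ I hI hd1 hd2 m (fun x hx => (hbound x hx).1) hx₁I hmem2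
    have h2 : Real.sqrt (m / 2 * (x₁ - x₂) ^ 2) ≤ r := by
      rw [← hr]; exact Real.sqrt_le_sqrt h1
    have h3 : Real.sqrt (m / 2 * (x₁ - x₂) ^ 2)
        = Real.sqrt m / Real.sqrt 2 * (x₂ - x₁) := by
      have : (x₁ - x₂) ^ 2 = (x₂ - x₁) ^ 2 := by ring
      rw [this, Real.sqrt_mul (by positivity), Real.sqrt_sq (sub_nonneg.2 hle),
        Real.sqrt_div hm.le]
    rw [h3, div_mul_eq_mul_div, div_le_iff₀ hs2] at h2
    rw [le_div_iff₀ hsm]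
    nlinarith
  set S : Finset (ℝ × ℝ) := I'.filter (fun p => x₁ ≤ p.1 ∧ p.2 ≤ x₂) with hS
  have hSsub : S ⊆ I' := Finset.filter_subset _ _
  -- cardinality of the exceptional set
  have hTmem : ∀ p ∈ I' \ S, x₁ ∈ Set.Icc p.1 p.2 ∨ x₂ ∈ Set.Icc p.1 p.2 := by
    intro p hp
    rw [Finset.mem_sdiff] at hp
    obtain ⟨hpI, hpS⟩ := hp
    rw [hS, Finset.mem_filter, not_and] at hpS
    obtain ⟨t, ht1, ht2⟩ := hinter p hpI
    by_cases h1 : x₁ ≤ p.1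
    · right
      have := hpS hpI
      push_neg at this
      exact ⟨ht1.1.trans ht2.2, le_of_lt (this h1)⟩
    · left
      push_neg at h1
      exact ⟨h1.le, ht2.1.trans ht1.2⟩
  have hTcard : (I' \ S).card ≤ 2 := by
    have hinj : Set.InjOn (fun p : ℝ × ℝ => if x₁ ∈ Set.Icc p.1 p.2 then (0 : Fin 2) else 1)
        ↑(I' \ S) := by
      intro p hp q hq hfq
      rw [Finset.mem_coe] at hp hq
      by_contra hne
      have hd := hdisj p (Finset.mem_sdiff.1 hp).1 q (Finset.mem_sdiff.1 hq).1 hne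
      by_cases h1 : x₁ ∈ Set.Icc p.1 p.2 <;> by_cases h2 : x₁ ∈ Set.Icc q.1 q.2
      · exact Set.disjoint_left.mp hd h1 h2
      · simp [h1, h2] at hfq
      · simp [h1, h2] at hfq
      · have hp2 := (hTmem p hp).resolve_left h1
        have hq2 := (hTmem q hq).resolve_left h2
        exact Set.disjoint_left.mp hd hp2 hq2
    have := Finset.card_le_card_of_injOn _ (fun a _ => Finset.mem_univ _) hinj
    simpa using this
  -- measure-theoretic packing bound
  have hpair : (↑S : Set (ℝ × ℝ)).PairwiseDisjoint (fun p => Set.Icc p.1 p.2) := by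
    intro p hp q hq hne
    exact hdisj p (hSsub (Finset.mem_coe.1 hp)) q (hSsub (Finset.mem_coe.1 hq)) hne
  have hsum : (S.card : ENNReal) * ENNReal.ofReal L ≤ ENNReal.ofReal (x₂ - x₁) := by
    calc (S.card : ENNReal) * ENNReal.ofReal L
        = ∑ _p ∈ S, ENNReal.ofReal L := by rw [Finset.sum_const, nsmul_eq_mul]
      _ ≤ ∑ p ∈ S, MeasureTheory.volume (Set.Icc p.1 p.2) := by
          apply Finset.sum_le_sum
          intro p hp
          rw [Real.volume_Icc]
          exact ENNReal.ofReal_le_ofReal (hLen p (hSsub hp))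
      _ = MeasureTheory.volume (⋃ p ∈ S, Set.Icc p.1 p.2) :=
          (MeasureTheory.measure_biUnion_finset hpair (fun p _ => measurableSet_Icc)).symm
      _ ≤ MeasureTheory.volume (Set.Icc x₁ x₂) := by
          apply MeasureTheory.measure_mono
          apply Set.iUnion₂_subset
          intro p hp
          have hp' := Finset.mem_filter.1 hp
          exact Set.Icc_subset_Icc hp'.2.1 hp'.2.2
      _ = ENNReal.ofReal (x₂ - x₁) := Real.volume_Icc
  have hcardS : (S.card : ℝ) * L ≤ x₂ - x₁ := by
    rw [← ENNReal.ofReal_natCast, ← ENNReal.ofReal_mul (by positivity)] at hsum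
    exact (ENNReal.ofReal_le_ofReal_iff (sub_nonneg.2 hle)).mp hsum
  -- combine
  have hSle : (S.card : ℝ) ≤ c₀ * r / l := by
    have h1 : (S.card : ℝ) ≤ (r * Real.sqrt 2 / Real.sqrt m) / L := by
      rw [le_div_iff₀ hLpos]
      linarith
    have h2 : (r * Real.sqrt 2 / Real.sqrt m) / L = c₀ * r / l := by
      rw [hc₀, Real.sqrt_div hM.le, hL]
      field_simp
    linarith [h2 ▸ h1]
  have hcards : (I'.card : ℝ) ≤ (S.card : ℝ) + 2 := by
    have := Finset.card_sdiff_add_card_eq_card hSsub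
    have : I'.card = (I' \ S).card + S.card := this.symm
    rw [this]
    push_cast
    have : ((I' \ S).card : ℝ) ≤ 2 := by exact_mod_cast hTcard
    linarith
  linarith
end
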